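/- arXiv:1103.5415 — 8 statements merged into one kernel-verified Lean document; each statement's English description precedes it below -/
import Mathlib

section
/- Let K be a field, n ≥ 1, and let F_0,…,F_n be finite-dimensional K-vector spaces with dim F_i = f_i. Let Compl(f) be the set of tuples (d_1,…,d_n) of linear maps d_i : F_i → F_{i−1} with d_i ∘ d_{i+1} = 0 for 1 ≤ i ≤ n−1. Then: (i) Compl(f) is the union, over all f-maximal rank sequences r, of the sets C(f,r) = {(d_1,…,d_n) ∈ Compl(f) : rank d_i ≤ r_i for all i}; and (ii) for any two distinct f-maximal rank sequences r ≠ r′, the set C(f,r) is not contained in C(f,r′). -/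
section
variable {K : Type*} [Field K] {F : ℕ → Type*} [∀ i, AddCommGroup (F i)]
  [∀ i, Module K (F i)]

/-- `D` (with `D j : F (j+1) → F j` playing the role of `d_{j+1}`) is a complex:
`d_i ∘ d_{i+1} = 0` for `1 ≤ i ≤ n - 1`. -/
def IsComplexSeq (n : ℕ) (D : ∀ i : ℕ, F (i + 1) →ₗ[K] F i) : Prop :=
  ∀ j : ℕ, j + 2 ≤ n → (D j).comp (D (j + 1)) = 0

end

/-- `(r 1, …, r n)` is an admissible rank sequence for `f`: with the conventions
`r 0 = r (n+1) = 0` (entries outside `1,…,n` vanish), `r i + r (i+1) ≤ f i` for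
all `0 ≤ i ≤ n`. -/
def AdmissibleRanks (n : ℕ) (f r : ℕ → ℕ) : Prop :=
  r 0 = 0 ∧ (∀ i, n < i → r i = 0) ∧ ∀ i ≤ n, r i + r (i + 1) ≤ f i

/-- An admissible rank sequence is `f`-maximal if no componentwise larger admissible
rank sequence exists. -/
def MaximalRanks (n : ℕ) (f r : ℕ → ℕ) : Prop :=
  AdmissibleRanks n f r ∧
    ∀ r' : ℕ → ℕ, AdmissibleRanks n f r' → (∀ i, r i ≤ r' i) → ∀ i, r' i = r i

open Module

section Aux
variable (K : Type*) [Field K]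

/-- read the last `r` coordinates -/
noncomputable def pmapAux (a r : ℕ) (h : r ≤ a) : (Fin a → K) →ₗ[K] (Fin r → K) :=
  LinearMap.funLeft K K (fun k => ⟨a - r + (k : ℕ), by have := k.isLt; omega⟩)

/-- write to the first `r` coordinates -/
noncomputable def gmapAux (b r : ℕ) : (Fin r → K) →ₗ[K] (Fin b → K) :=
  LinearMap.pi (fun k => if h : (k : ℕ) < r then LinearMap.proj (⟨(k : ℕ), h⟩ : Fin r) else 0)

noncomputable def shiftMap (a b r : ℕ) (h : r ≤ a) : (Fin a → K) →ₗ[K] (Fin b → K) :=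
  (gmapAux K b r).comp (pmapAux K a r h)

lemma pmapAux_surjective (a r : ℕ) (h : r ≤ a) : Function.Surjective (pmapAux K a r h) := by
  apply LinearMap.funLeft_surjective_of_injective
  intro x y hxy
  have hx := x.isLt; have hy := y.isLt
  have : a - r + (x : ℕ) = a - r + (y : ℕ) := congrArg Fin.val hxy
  exact Fin.ext (by omega)

lemma gmapAux_apply (b r : ℕ) (x : Fin r → K) (j : Fin b) :
    gmapAux K b r x j = if h : (j : ℕ) < r then x ⟨(j : ℕ), h⟩ else 0 := by
  simp only [gmapAux, LinearMap.pi_apply]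
  split <;> simp_all

lemma gmapAux_injective (b r : ℕ) (h : r ≤ b) : Function.Injective (gmapAux K b r) := by
  intro x y hxy
  funext k
  have hk : (k : ℕ) < b := lt_of_lt_of_le k.isLt h
  have := congrFun hxy ⟨(k : ℕ), hk⟩
  rw [gmapAux_apply, gmapAux_apply] at this
  simpa [k.isLt] using this

lemma shiftMap_rank (a b r : ℕ) (h : r ≤ a) (h' : r ≤ b) :
    finrank K (LinearMap.range (shiftMap K a b r h)) = r := by
  rw [shiftMap, LinearMap.range_comp,
    LinearMap.range_eq_top.2 (pmapAux_surjective K a r h), Submodule.map_top,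
    LinearMap.finrank_range_of_inj (gmapAux_injective K b r h')]
  simp

lemma shiftMap_comp (a b c r s : ℕ) (hr : r ≤ b) (hs : s ≤ a) (hrs : r + s ≤ b) :
    (shiftMap K b c r hr).comp (shiftMap K a b s hs) = 0 := by
  refine LinearMap.ext fun y => funext fun k => ?_
  simp only [shiftMap, LinearMap.comp_apply, LinearMap.zero_apply, Pi.zero_apply]
  rw [gmapAux_apply]
  split
  · rename_i hk
    rw [show (pmapAux K b r hr) ((gmapAux K b s) ((pmapAux K a s hs) y)) ⟨(k:ℕ), hk⟩
        = (gmapAux K b s) ((pmapAux K a s hs) y) ⟨b - r + (k:ℕ), by omega⟩ from rfl,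
      gmapAux_apply, dif_neg (by simp only []; omega)]
  · rfl

lemma exists_complex_of_admissible (K : Type*) [Field K] (n : ℕ)
    (F : ℕ → Type*) [∀ i, AddCommGroup (F i)] [∀ i, Module K (F i)]
    [∀ i, FiniteDimensional K (F i)] (f : ℕ → ℕ)
    (hf : ∀ i ≤ n, finrank K (F i) = f i)
    (r : ℕ → ℕ) (hr0 : r 0 = 0) (hrn : ∀ i, n < i → r i = 0)
    (hadm : ∀ i ≤ n, r i + r (i + 1) ≤ f i) :
    ∃ D : ∀ i : ℕ, F (i + 1) →ₗ[K] F i,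
      (∀ j : ℕ, j + 2 ≤ n → (D j).comp (D (j + 1)) = 0) ∧
      ∀ j < n, finrank K (LinearMap.range (D j)) = r (j + 1) := by
  have hle : ∀ j : ℕ, r (j + 1) ≤ finrank K (F (j + 1)) := by
    intro j
    by_cases h : j + 1 ≤ n
    · rw [hf _ h]; exact le_trans (Nat.le_add_right _ _) (hadm _ h)
    · rw [hrn _ (by omega)]; exact Nat.zero_le _
  set E : ∀ i, F i ≃ₗ[K] (Fin (finrank K (F i)) → K) :=
    fun i => (Module.finBasis K (F i)).equivFun with hE
  refine ⟨fun j => (((E j).symm.toLinearMap.comp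
      (shiftMap K _ _ (r (j + 1)) (hle j))).comp (E (j + 1)).toLinearMap), ?_, ?_⟩
  · intro j hj
    have h0 := shiftMap_comp K (finrank K (F (j + 2))) (finrank K (F (j + 1)))
      (finrank K (F j)) (r (j + 1)) (r (j + 2)) (hle j) (hle (j + 1))
      (by rw [hf (j + 1) (by omega)]; exact hadm (j + 1) (by omega))
    refine LinearMap.ext fun x => ?_
    simp only [LinearMap.comp_apply, LinearEquiv.coe_coe, LinearEquiv.apply_symm_apply,
      LinearMap.zero_apply]
    have h1 := congrFun (congrArg DFunLike.coe h0) ((E (j + 2)) x)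
    simp only [LinearMap.comp_apply, LinearMap.zero_apply] at h1
    rw [h1]
    simp
  · intro j hj
    rw [LinearMap.range_comp, LinearEquiv.range, Submodule.map_top, LinearMap.range_comp,
      LinearEquiv.finrank_map_eq, shiftMap_rank]
    · rw [hf j (le_of_lt hj)]
      exact le_trans (Nat.le_add_left _ _) (hadm j (le_of_lt hj))
end Aux

lemma adm_le (n : ℕ) (f r : ℕ → ℕ) (hr : AdmissibleRanks n f r) :
    ∀ i ≤ n, r i ≤ f i := fun i hi =>
  le_trans (Nat.le_add_right _ _) (hr.2.2 i hi)

lemma exists_maximal (n : ℕ) (f r : ℕ → ℕ) (hr : AdmissibleRanks n f r) :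
    ∃ r', MaximalRanks n f r' ∧ ∀ i, r i ≤ r' i := by
  set W := ∑ i ∈ Finset.range (n + 1), f i with hW
  have key : ∀ m : ℕ, ∀ s : ℕ → ℕ, AdmissibleRanks n f s →
      W - (∑ i ∈ Finset.range (n + 1), s i) = m →
      ∃ r', MaximalRanks n f r' ∧ ∀ i, s i ≤ r' i := by
    intro m
    induction m using Nat.strong_induction_on with
    | _ m ih =>
      intro s hs hm
      by_cases hmax : ∀ r'' : ℕ → ℕ, AdmissibleRanks n f r'' → (∀ i, s i ≤ r'' i) → ∀ i, r'' i = s i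
      · exact ⟨s, ⟨hs, hmax⟩, fun i => le_rfl⟩
      · push_neg at hmax
        obtain ⟨t, ht, hst, i0, hi0⟩ := hmax
        have hi0' : s i0 < t i0 := lt_of_le_of_ne (hst i0) (Ne.symm hi0)
        have hi0n : i0 ∈ Finset.range (n + 1) := by
          rw [Finset.mem_range]
          by_contra h
          rw [hs.2.1 i0 (by omega), ht.2.1 i0 (by omega)] at hi0'
          omega
        have hsum : (∑ i ∈ Finset.range (n + 1), s i) < ∑ i ∈ Finset.range (n + 1), t i :=
          Finset.sum_lt_sum (fun i _ => hst i) ⟨i0, hi0n, hi0'⟩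
        have htW : (∑ i ∈ Finset.range (n + 1), t i) ≤ W :=
          Finset.sum_le_sum (fun i hi => adm_le n f t ht i (by
            rw [Finset.mem_range] at hi; omega))
        obtain ⟨r', hr', htr'⟩ := ih (W - ∑ i ∈ Finset.range (n + 1), t i) (by omega) t ht rfl
        exact ⟨r', hr', fun i => le_trans (hst i) (htr' i)⟩
  exact key _ r hr rfl

/-- The variety of complexes is the union, over all `f`-maximal rank sequences `r`,
of the loci `C(f, r)` of complexes with `rank d_i ≤ r i`; and for distinct maximal
rank sequences `r ≠ r'`, `C(f, r)` is not contained in `C(f, r')`. -/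
theorem stmt0 (K : Type*) [Field K] (n : ℕ) (hn : 1 ≤ n)
    (F : ℕ → Type*) [∀ i, AddCommGroup (F i)] [∀ i, Module K (F i)]
    [∀ i, FiniteDimensional K (F i)]
    (f : ℕ → ℕ) (hf : ∀ i ≤ n, Module.finrank K (F i) = f i) :
    ({D : ∀ i : ℕ, F (i + 1) →ₗ[K] F i | IsComplexSeq n D} =
      ⋃ r ∈ {r : ℕ → ℕ | MaximalRanks n f r},
        {D : ∀ i : ℕ, F (i + 1) →ₗ[K] F i | IsComplexSeq n D ∧
          ∀ j < n, Module.finrank K (LinearMap.range (D j)) ≤ r (j + 1)}) ∧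
    ∀ r r' : ℕ → ℕ, MaximalRanks n f r → MaximalRanks n f r' → r ≠ r' →
      ¬ ({D : ∀ i : ℕ, F (i + 1) →ₗ[K] F i | IsComplexSeq n D ∧
            ∀ j < n, Module.finrank K (LinearMap.range (D j)) ≤ r (j + 1)} ⊆
          {D : ∀ i : ℕ, F (i + 1) →ₗ[K] F i | IsComplexSeq n D ∧
            ∀ j < n, Module.finrank K (LinearMap.range (D j)) ≤ r' (j + 1)}) := by
  constructor
  · ext D
    simp only [Set.mem_setOf_eq, Set.mem_iUnion]
    constructor
    · intro hD
      set ρ : ℕ → ℕ := fun i =>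
        if 1 ≤ i ∧ i ≤ n then Module.finrank K (LinearMap.range (D (i - 1))) else 0 with hρ
      have hρadm : AdmissibleRanks n f ρ := by
        refine ⟨by simp [hρ], fun i hi => by simp only [hρ]; rw [if_neg (by omega)],
          fun i hi => ?_⟩
        rcases i with _ | j
        · simp only [hρ]
          rw [if_neg (by omega), if_pos (by omega)]
          have e0 : Module.finrank K (LinearMap.range (D (0 + 1 - 1)))
              = Module.finrank K (LinearMap.range (D 0)) := rfl
          rw [e0]
          have h3 : Module.finrank K (LinearMap.range (D 0)) ≤ Module.finrank K (F 0) :=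
            Submodule.finrank_le _
          rw [hf 0 (by omega)] at h3
          omega
        · simp only [hρ]
          rw [if_pos (by omega)]
          have e1 : Module.finrank K (LinearMap.range (D (j + 1 - 1)))
              = Module.finrank K (LinearMap.range (D j)) := rfl
          have e2 : Module.finrank K (LinearMap.range (D (j + 1 + 1 - 1)))
              = Module.finrank K (LinearMap.range (D (j + 1))) := rfl
          rw [e1, e2]
          by_cases h2 : j + 2 ≤ n
          · rw [if_pos (by omega)]
            have hcomp : LinearMap.range (D (j + 1)) ≤ LinearMap.ker (D j) :=
              LinearMap.range_le_ker_iff.2 (hD j h2)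
            have h3 : Module.finrank K (LinearMap.range (D (j + 1)))
                ≤ Module.finrank K (LinearMap.ker (D j)) := Submodule.finrank_mono hcomp
            have h4 := LinearMap.finrank_range_add_finrank_ker (D j)
            rw [hf (j + 1) (by omega)] at h4
            omega
          · rw [if_neg (by omega)]
            have h3 : Module.finrank K (LinearMap.range (D j)) ≤ Module.finrank K (F (j + 1)) :=
              LinearMap.finrank_range_le _
            rw [hf (j + 1) hi] at h3
            omega
      obtain ⟨rmax, hrmax, hge⟩ := exists_maximal n f ρ hρadm
      refine ⟨rmax, hrmax, hD, fun j hj => le_trans ?_ (hge (j + 1))⟩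
      simp only [hρ]
      rw [if_pos (by omega)]
      exact le_rfl
    · rintro ⟨r, hr, hD, _⟩
      exact hD
  · intro r r' hr hr' hne hsub
    have hnle : ∃ i, r' i < r i := by
      by_contra h
      push_neg at h
      exact hne (funext fun i => hr.2 r' hr'.1 h i).symm
    obtain ⟨i, hi⟩ := hnle
    have hi1 : 1 ≤ i := by
      by_contra h
      rw [show i = 0 by omega, hr.1.1] at hi
      omega
    have hin : i ≤ n := by
      by_contra h
      rw [hr.1.2.1 i (by omega)] at hi
      omega
    obtain ⟨j, rfl⟩ : ∃ j, i = j + 1 := ⟨i - 1, by omega⟩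
    obtain ⟨D, hDc, hDr⟩ := exists_complex_of_admissible K n F f hf r hr.1.1 hr.1.2.1 hr.1.2.2
    have hmem : D ∈ {D : ∀ i : ℕ, F (i + 1) →ₗ[K] F i | IsComplexSeq n D ∧
        ∀ j < n, Module.finrank K (LinearMap.range (D j)) ≤ r (j + 1)} :=
      ⟨hDc, fun k hk => (hDr k hk).le⟩
    have h2 := (hsub hmem).2 j (by omega)
    rw [hDr j (by omega)] at h2
    omega
end

section
/- Let K be a field, n ≥ 1, and let F_0,…,F_n be finite-dimensional K-vector spaces with dim F_i = f_i. For every admissible rank sequence (r_1,…,r_n) for f (i.e. r_i + r_{i+1} ≤ f_i for all 0 ≤ i ≤ n with r_0 = r_{n+1} = 0), there exists a tuple (d_1,…,d_n) of linear maps d_i : F_i → F_{i−1} with d_i ∘ d_{i+1} = 0 for 1 ≤ i ≤ n−1 and rank d_i = r_i exactly, for all 1 ≤ i ≤ n. -/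
/-- For every admissible rank sequence `r` for `f` there is a complex
`(d_1, …, d_n)` with `rank d_i = r i` exactly, for all `1 ≤ i ≤ n`. -/
theorem stmt1 (K : Type*) [Field K] (n : ℕ) (hn : 1 ≤ n)
    (F : ℕ → Type*) [∀ i, AddCommGroup (F i)] [∀ i, Module K (F i)]
    [∀ i, FiniteDimensional K (F i)]
    (f : ℕ → ℕ) (hf : ∀ i ≤ n, Module.finrank K (F i) = f i)
    (r : ℕ → ℕ) (hr : AdmissibleRanks n f r) :
    ∃ D : ∀ i : ℕ, F (i + 1) →ₗ[K] F i, IsComplexSeq n D ∧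
      ∀ j < n, Module.finrank K (LinearMap.range (D j)) = r (j + 1) := by
  classical
  obtain ⟨hr0, hrn, hradm⟩ := hr
  set m : ℕ → ℕ := fun i => Module.finrank K (F i) with hm
  have key : ∀ j, j < n → r (j+1) ≤ m j ∧ r (j+1) ≤ m (j+1) := by
    intro j hj
    have e1 : m j = f j := hf j (le_of_lt hj)
    have e2 : m (j+1) = f (j+1) := hf (j+1) hj
    have a1 := hradm j (le_of_lt hj)
    have a2 := hradm (j+1) hj
    omega
  let b : ∀ i, Module.Basis (Fin (m i)) K (F i) := fun i => Module.finBasis K (F i)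
  refine ⟨fun j => if hj : j < n then (b (j+1)).constr K (fun k =>
      if hk : (k : ℕ) < r (j+1) then b j ⟨m j - 1 - (k : ℕ), by
        have := (key j hj).1; omega⟩ else 0) else 0, ?_, ?_⟩
  · intro j hjn
    have hj : j < n := by omega
    have hj1 : j + 1 < n := by omega
    simp only [dif_pos hj, dif_pos hj1]
    apply (b (j+2)).ext
    intro k
    simp only [LinearMap.comp_apply, Module.Basis.constr_basis]
    by_cases hk : (k : ℕ) < r (j+2)
    · rw [dif_pos hk, Module.Basis.constr_basis, dif_neg]
      · simp
      · have e2 : m (j+1) = f (j+1) := hf (j+1) hj1.le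
        have a2 : r (j+1) + r (j+2) ≤ f (j+1) := hradm (j+1) hj1.le
        show ¬ (m (j+1) - 1 - (k : ℕ) < r (j+1))
        omega
    · rw [dif_neg hk, map_zero]
      simp
  · intro j hj
    beta_reduce
    rw [dif_pos hj, Module.Basis.constr_range]
    have h1 := (key j hj).1
    have h2 := (key j hj).2
    set g : Fin (m (j+1)) → F j := fun k =>
      if hk : (k : ℕ) < r (j+1) then b j ⟨m j - 1 - (k : ℕ), by omega⟩ else 0 with hg
    set h : Fin (r (j+1)) → F j := fun k => b j ⟨m j - 1 - (k : ℕ), by omega⟩ with hh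
    have hspan : Submodule.span K (Set.range g) = Submodule.span K (Set.range h) := by
      apply le_antisymm
      · rw [Submodule.span_le]
        rintro x ⟨k, rfl⟩
        by_cases hk : (k : ℕ) < r (j+1)
        · have : g k = h ⟨(k : ℕ), hk⟩ := by simp [hg, hh, dif_pos hk]
          rw [this]
          exact Submodule.subset_span ⟨_, rfl⟩
        · have : g k = 0 := by simp [hg, dif_neg hk]
          rw [this]; exact Submodule.zero_mem _
      · apply Submodule.span_mono
        rintro x ⟨k, rfl⟩
        refine ⟨Fin.castLE h2 k, ?_⟩
        have hk : ((Fin.castLE h2 k : Fin (m (j+1))) : ℕ) < r (j+1) := k.isLt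
        simp [hg, hh, dif_pos hk]
    rw [hspan]
    have hinj : Function.Injective h := by
      intro k1 k2 hk
      have := (b j).injective hk
      have h12 : m j - 1 - (k1 : ℕ) = m j - 1 - (k2 : ℕ) := Fin.mk.inj_iff.mp this
      have hk1 := k1.isLt
      have hk2 := k2.isLt
      ext
      omega
    have hli : LinearIndependent K h := by
      have : h = (b j) ∘ (fun k : Fin (r (j+1)) => (⟨m j - 1 - (k : ℕ), by omega⟩ : Fin (m j))) := rfl
      rw [this]
      apply (b j).linearIndependent.comp
      intro k1 k2 hk
      have h12 : m j - 1 - (k1 : ℕ) = m j - 1 - (k2 : ℕ) := Fin.mk.inj_iff.mp hk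
      have hk1 := k1.isLt
      have hk2 := k2.isLt
      ext
      omega
    rw [finrank_span_eq_card hli, Fintype.card_fin]
end

section
/- (a) If r_i + r_{i+1} ≤ β_i and s_i + s_{i+1} ≤ β_i for all 0 ≤ i ≤ n (conventions r_0 = r_{n+1} = s_0 = s_{n+1} = 0), then every vertex of the up-and-down graph Γ(β;r,s) is incident to at most one red edge and at most one blue edge. (b) If moreover β = [m_n,…,m_1] is a band dimension vector (β_i = m_i + m_{i+1} with m_0 = m_{n+1} = 0) and r = s = (m_1,…,m_n), then every vertex of Γ([m_n,…,m_1]) is incident to exactly one red edge and exactly one blue edge. -/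
/-- Vertices `e^(i)_j` of the up-and-down graph: pairs `(i, j)` with `0 ≤ i ≤ n`
and `1 ≤ j ≤ β i`. -/
def UDVert (n : ℕ) (β : ℕ → ℕ) : Type :=
  {p : ℕ × ℕ // p.1 ≤ n ∧ 1 ≤ p.2 ∧ p.2 ≤ β p.1}

/-- The red edges of the up-and-down graph `Γ(β; r, s)`: for `1 ≤ i ≤ n`, if `n - i`
is even they join `e^(i)_j` to `e^(i-1)_j` for `1 ≤ j ≤ r i`, and if `n - i` is odd
they join `e^(i)_{β i + 1 - j}` to `e^(i-1)_{β (i-1) + 1 - j}` for `1 ≤ j ≤ r i`. -/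
def RedAdj (n : ℕ) (β r : ℕ → ℕ) (p q : ℕ × ℕ) : Prop :=
  ∃ i j : ℕ, 1 ≤ i ∧ i ≤ n ∧ 1 ≤ j ∧ j ≤ r i ∧
    ((Even (n - i) ∧
        ((p = (i, j) ∧ q = (i - 1, j)) ∨ (q = (i, j) ∧ p = (i - 1, j)))) ∨
      (¬ Even (n - i) ∧
        ((p = (i, β i + 1 - j) ∧ q = (i - 1, β (i - 1) + 1 - j)) ∨
          (q = (i, β i + 1 - j) ∧ p = (i - 1, β (i - 1) + 1 - j)))))

/-- The blue edges of the up-and-down graph `Γ(β; r, s)`: for `1 ≤ i ≤ n`, if `n - i`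
is even they join `e^(i)_{β i + 1 - j}` to `e^(i-1)_{β (i-1) + 1 - j}` for `1 ≤ j ≤ s i`,
and if `n - i` is odd they join `e^(i)_j` to `e^(i-1)_j` for `1 ≤ j ≤ s i`. -/
def BlueAdj (n : ℕ) (β s : ℕ → ℕ) (p q : ℕ × ℕ) : Prop :=
  ∃ i j : ℕ, 1 ≤ i ∧ i ≤ n ∧ 1 ≤ j ∧ j ≤ s i ∧
    ((¬ Even (n - i) ∧
        ((p = (i, j) ∧ q = (i - 1, j)) ∨ (q = (i, j) ∧ p = (i - 1, j)))) ∨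
      (Even (n - i) ∧
        ((p = (i, β i + 1 - j) ∧ q = (i - 1, β (i - 1) + 1 - j)) ∨
          (q = (i, β i + 1 - j) ∧ p = (i - 1, β (i - 1) + 1 - j)))))

/-- The up-and-down graph `Γ(β; r, s)` (edges of both colors). -/
def UDGraph (n : ℕ) (β r s : ℕ → ℕ) : SimpleGraph (UDVert n β) where
  Adj x y := x ≠ y ∧ (RedAdj n β r x.1 y.1 ∨ BlueAdj n β s x.1 y.1)
  symm := by
    constructor
    rintro x y ⟨hxy, h⟩
    refine ⟨hxy.symm, ?_⟩
    rcases h with ⟨i, j, h1, h2, h3, h4, h5⟩ | ⟨i, j, h1, h2, h3, h4, h5⟩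
    · exact Or.inl ⟨i, j, h1, h2, h3, h4, by tauto⟩
    · exact Or.inr ⟨i, j, h1, h2, h3, h4, by tauto⟩
  loopless := by constructor; rintro x ⟨h, -⟩; exact h rfl

/-- The sequence `m` extended by the conventions `m 0 = m (n+1) = 0` (entries outside
`1,…,n` are set to `0`). -/
def bandM (n : ℕ) (m : ℕ → ℕ) : ℕ → ℕ := fun i => if 1 ≤ i ∧ i ≤ n then m i else 0

/-- The band dimension vector `[m_n, …, m_1]`, i.e. `β i = m i + m (i+1)` with the
conventions `m 0 = m (n+1) = 0`. -/
def bandBeta (n : ℕ) (m : ℕ → ℕ) : ℕ → ℕ := fun i => bandM n m i + bandM n m (i + 1)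

/-- The up-and-down graph `Γ([m_n, …, m_1])` of a band dimension vector:
`r = s = (m_1, …, m_n)`. -/
def bandGraph (n : ℕ) (m : ℕ → ℕ) : SimpleGraph (UDVert n (bandBeta n m)) :=
  UDGraph n (bandBeta n m) (bandM n m) (bandM n m)

/-- `N([m_n, …, m_1])`: the number of connected components of `Γ([m_n, …, m_1])`. -/
noncomputable def NBand (n : ℕ) (m : ℕ → ℕ) : ℕ :=
  Nat.card (bandGraph n m).ConnectedComponent

/-- Generic adjacency with an abstract parity predicate `P`. -/
def GenAdj (n : ℕ) (β r : ℕ → ℕ) (P : ℕ → Prop) (p q : ℕ × ℕ) : Prop :=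
  ∃ i j : ℕ, 1 ≤ i ∧ i ≤ n ∧ 1 ≤ j ∧ j ≤ r i ∧
    ((P i ∧
        ((p = (i, j) ∧ q = (i - 1, j)) ∨ (q = (i, j) ∧ p = (i - 1, j)))) ∨
      (¬ P i ∧
        ((p = (i, β i + 1 - j) ∧ q = (i - 1, β (i - 1) + 1 - j)) ∨
          (q = (i, β i + 1 - j) ∧ p = (i - 1, β (i - 1) + 1 - j)))))

lemma red_iff (n : ℕ) (β r : ℕ → ℕ) (p q : ℕ × ℕ) :
    RedAdj n β r p q ↔ GenAdj n β r (fun i => Even (n - i)) p q := Iff.rfl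

lemma blue_iff (n : ℕ) (β s : ℕ → ℕ) (p q : ℕ × ℕ) :
    BlueAdj n β s p q ↔ GenAdj n β s (fun i => ¬ Even (n - i)) p q := by
  unfold BlueAdj GenAdj
  constructor <;> rintro ⟨i, j, h1, h2, h3, h4, h5⟩ <;>
    exact ⟨i, j, h1, h2, h3, h4, by tauto⟩

lemma gen_cases (n : ℕ) (β r : ℕ → ℕ) (P : ℕ → Prop)
    (hadm : ∀ i ≤ n, r i + r (i + 1) ≤ β i)
    (a b c d : ℕ) (han : a ≤ n) (hb1 : 1 ≤ b) (hba : b ≤ β a)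
    (h : GenAdj n β r P (a, b) (c, d)) :
    (1 ≤ a ∧ P a ∧ b ≤ r a ∧ c = a - 1 ∧ d = b) ∨
    (1 ≤ a ∧ ¬ P a ∧ β a + 1 - r a ≤ b ∧ c = a - 1 ∧
      d = β (a - 1) + 1 - (β a + 1 - b)) ∨
    (a + 1 ≤ n ∧ P (a + 1) ∧ b ≤ r (a + 1) ∧ c = a + 1 ∧ d = b) ∨
    (a + 1 ≤ n ∧ ¬ P (a + 1) ∧ β a + 1 - r (a + 1) ≤ b ∧ c = a + 1 ∧
      d = β (a + 1) + 1 - (β a + 1 - b)) := by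
  obtain ⟨i, j, hi1, hin, hj1, hjr, H⟩ := h
  rcases H with ⟨hP, hE⟩ | ⟨hP, hE⟩ <;>
    rcases hE with ⟨hp, hq⟩ | ⟨hq, hp⟩ <;>
      simp only [Prod.mk.injEq] at hp hq
  · -- straight, p upper: i = a, j = b
    have hia : a = i := hp.1
    subst hia
    exact Or.inl ⟨hi1, hP, by omega, by omega, by omega⟩
  · -- straight, p lower: i = a + 1, j = b
    have hia : i = a + 1 := by omega
    subst hia
    exact Or.inr (Or.inr (Or.inl ⟨hin, hP, by omega, by omega, by omega⟩))
  · -- flipped, p upper: i = a, b = β a + 1 - j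
    have hia : a = i := hp.1
    subst hia
    have hra : r a ≤ β a := by have := hadm a han; omega
    exact Or.inr (Or.inl ⟨hi1, hP, by omega, by omega, by omega⟩)
  · -- flipped, p lower: i = a + 1, b = β a + 1 - j
    have hia : i = a + 1 := by omega
    subst hia
    have hra : r (a + 1) ≤ β a := by have := hadm a han; omega
    simp only [Nat.add_sub_cancel] at hp hq
    exact Or.inr (Or.inr (Or.inr ⟨hin, hP, by omega, by omega, by omega⟩))

lemma gen_unique (n : ℕ) (β r : ℕ → ℕ) (P : ℕ → Prop)
    (hadm : ∀ i ≤ n, r i + r (i + 1) ≤ β i)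
    (hP : ∀ a, a + 1 ≤ n → (P a ↔ ¬ P (a + 1)))
    (a b c d c' d' : ℕ) (han : a ≤ n) (hb1 : 1 ≤ b) (hba : b ≤ β a)
    (h : GenAdj n β r P (a, b) (c, d)) (h' : GenAdj n β r P (a, b) (c', d')) :
    c = c' ∧ d = d' := by
  have H := gen_cases n β r P hadm a b c d han hb1 hba h
  have H' := gen_cases n β r P hadm a b c' d' han hb1 hba h'
  have had := hadm a han
  rcases H with ⟨h1, h2, h3, h4, h5⟩ | ⟨h1, h2, h3, h4, h5⟩ |
    ⟨h1, h2, h3, h4, h5⟩ | ⟨h1, h2, h3, h4, h5⟩ <;>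
  rcases H' with ⟨g1, g2, g3, g4, g5⟩ | ⟨g1, g2, g3, g4, g5⟩ |
    ⟨g1, g2, g3, g4, g5⟩ | ⟨g1, g2, g3, g4, g5⟩ <;>
  first
    | exact ⟨by omega, by omega⟩
    | exact absurd h2 g2
    | exact absurd g2 h2
    | exact absurd g2 ((hP a g1).mp h2)
    | exact absurd h2 ((hP a h1).mp g2)
    | exact absurd ((hP a g1).mpr g2) h2
    | exact absurd ((hP a h1).mpr h2) g2

lemma gen_exists (n : ℕ) (β r : ℕ → ℕ) (P : ℕ → Prop)
    (hr : ∀ i, 0 < r i → 1 ≤ i ∧ i ≤ n)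
    (hβ : ∀ i, i ≤ n → β i = r i + r (i + 1))
    (hP : ∀ a, a + 1 ≤ n → (P a ↔ ¬ P (a + 1)))
    (a b : ℕ) (han : a ≤ n) (hb1 : 1 ≤ b) (hba : b ≤ β a) :
    ∃ c d, (c ≤ n ∧ 1 ≤ d ∧ d ≤ β c) ∧ GenAdj n β r P (a, b) (c, d) := by
  have hβa := hβ a han
  by_cases hPa : P a
  · by_cases hb : b ≤ r a
    · -- upper straight edge: i = a, j = b, neighbor (a-1, b)
      have ha1 : 1 ≤ a ∧ a ≤ n := hr a (by omega)
      have hb' : β (a - 1) = r (a - 1) + r (a - 1 + 1) := hβ (a - 1) (by omega)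
      have hae : a - 1 + 1 = a := by omega
      rw [hae] at hb'
      refine ⟨a - 1, b, ⟨by omega, hb1, by omega⟩,
        a, b, ha1.1, ha1.2, hb1, hb, Or.inl ⟨hPa, Or.inl ⟨rfl, rfl⟩⟩⟩
    · -- lower flipped edge: i = a + 1, j = β a + 1 - b
      have h1 : 0 < r (a + 1) := by omega
      have ha1n := hr (a + 1) h1
      have hPa1 : ¬ P (a + 1) := (hP a ha1n.2).mp hPa
      have hβa1 := hβ (a + 1) ha1n.2
      refine ⟨a + 1, β (a + 1) + 1 - (β a + 1 - b), ⟨ha1n.2, by omega, by omega⟩,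
        a + 1, β a + 1 - b, by omega, ha1n.2, by omega, by omega,
        Or.inr ⟨hPa1, Or.inr ⟨rfl, ?_⟩⟩⟩
      simp only [Nat.add_sub_cancel, Prod.mk.injEq]
      exact ⟨trivial, by omega⟩
  · by_cases hb : b ≤ r (a + 1)
    · -- lower straight edge: i = a + 1, j = b
      have h1 : 0 < r (a + 1) := by omega
      have ha1n := hr (a + 1) h1
      have hPa1 : P (a + 1) := by have := hP a ha1n.2; tauto
      have hβa1 := hβ (a + 1) ha1n.2
      refine ⟨a + 1, b, ⟨ha1n.2, hb1, by omega⟩,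
        a + 1, b, by omega, ha1n.2, hb1, hb,
        Or.inl ⟨hPa1, Or.inr ⟨rfl, ?_⟩⟩⟩
      simp only [Nat.add_sub_cancel]
    · -- upper flipped edge: i = a, j = β a + 1 - b
      have h1 : 0 < r a := by omega
      have ha1 := hr a h1
      have hb' : β (a - 1) = r (a - 1) + r (a - 1 + 1) := hβ (a - 1) (by omega)
      have hae : a - 1 + 1 = a := by omega
      rw [hae] at hb'
      refine ⟨a - 1, β (a - 1) + 1 - (β a + 1 - b), ⟨by omega, by omega, by omega⟩,
        a, β a + 1 - b, ha1.1, ha1.2, by omega, by omega,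
        Or.inr ⟨hPa, Or.inl ⟨?_, rfl⟩⟩⟩
      simp only [Prod.mk.injEq]
      exact ⟨trivial, by omega⟩

lemma parity_alt (n : ℕ) : ∀ a, a + 1 ≤ n → (Even (n - a) ↔ ¬ Even (n - (a + 1))) := by
  intro a ha
  have h : n - a = (n - (a + 1)) + 1 := by omega
  rw [h, Nat.even_add_one]

/-- (a) Under the admissibility conditions, every vertex of `Γ(β; r, s)` is incident to
at most one red edge and at most one blue edge. (b) For a band dimension vector
`[m_n, …, m_1]` with `r = s = m`, every vertex is incident to exactly one red edge
and exactly one blue edge. -/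
theorem stmt2 (n : ℕ) (hn : 1 ≤ n) :
    (∀ β r s : ℕ → ℕ,
      r 0 = 0 → r (n + 1) = 0 → s 0 = 0 → s (n + 1) = 0 →
      (∀ i ≤ n, r i + r (i + 1) ≤ β i) → (∀ i ≤ n, s i + s (i + 1) ≤ β i) →
      (∀ x q q' : UDVert n β,
          RedAdj n β r x.1 q.1 → RedAdj n β r x.1 q'.1 → q = q') ∧
      (∀ x q q' : UDVert n β,
          BlueAdj n β s x.1 q.1 → BlueAdj n β s x.1 q'.1 → q = q')) ∧
    (∀ m : ℕ → ℕ, (∀ i, 1 ≤ i → i ≤ n → 0 < m i) →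
      ∀ x : UDVert n (bandBeta n m),
        (∃! q : UDVert n (bandBeta n m),
            RedAdj n (bandBeta n m) (bandM n m) x.1 q.1) ∧
        (∃! q : UDVert n (bandBeta n m),
            BlueAdj n (bandBeta n m) (bandM n m) x.1 q.1)) := by
  have hPred := parity_alt n
  have hPblue : ∀ a, a + 1 ≤ n → ((¬ Even (n - a)) ↔ ¬ ¬ Even (n - (a + 1))) := by
    intro a ha
    have := hPred a ha
    tauto
  constructor
  · intro β r s _ _ _ _ hradm hsadm
    constructor
    · rintro ⟨⟨a, b⟩, han, hb1, hba⟩ ⟨⟨c, d⟩, hq⟩ ⟨⟨c', d'⟩, hq'⟩ h h'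
      rw [red_iff] at h h'
      have := gen_unique n β r _ hradm hPred a b c d c' d' han hb1 hba h h'
      apply Subtype.ext
      simp only [Prod.mk.injEq]
      exact this
    · rintro ⟨⟨a, b⟩, han, hb1, hba⟩ ⟨⟨c, d⟩, hq⟩ ⟨⟨c', d'⟩, hq'⟩ h h'
      rw [blue_iff] at h h'
      have := gen_unique n β s _ hsadm hPblue a b c d c' d' han hb1 hba h h'
      apply Subtype.ext
      simp only [Prod.mk.injEq]
      exact this
  · intro m _
    have hr : ∀ i, 0 < bandM n m i → 1 ≤ i ∧ i ≤ n := by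
      intro i hi
      unfold bandM at hi
      split at hi
      · assumption
      · omega
    have hβ : ∀ i, i ≤ n → bandBeta n m i = bandM n m i + bandM n m (i + 1) := by
      intro i _
      rfl
    have hadm : ∀ i ≤ n, bandM n m i + bandM n m (i + 1) ≤ bandBeta n m i := by
      intro i _
      exact le_of_eq rfl
    rintro ⟨⟨a, b⟩, han, hb1, hba⟩
    constructor
    · obtain ⟨c, d, hcd, hadj⟩ :=
        gen_exists n (bandBeta n m) (bandM n m) _ hr hβ hPred a b han hb1 hba
      refine ⟨⟨(c, d), hcd⟩, (red_iff _ _ _ _ _).mpr hadj, ?_⟩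
      rintro ⟨⟨c', d'⟩, hq'⟩ h'
      rw [red_iff] at h'
      have := gen_unique n (bandBeta n m) (bandM n m) _ hadm hPred a b c' d' c d
        han hb1 hba h' hadj
      apply Subtype.ext
      simp only [Prod.mk.injEq]
      exact this
    · obtain ⟨c, d, hcd, hadj⟩ :=
        gen_exists n (bandBeta n m) (bandM n m) _ hr hβ hPblue a b han hb1 hba
      refine ⟨⟨(c, d), hcd⟩, (blue_iff _ _ _ _ _).mpr hadj, ?_⟩
      rintro ⟨⟨c', d'⟩, hq'⟩ h'
      rw [blue_iff] at h'
      have := gen_unique n (bandBeta n m) (bandM n m) _ hadm hPblue a b c' d' c d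
        han hb1 hba h' hadj
      apply Subtype.ext
      simp only [Prod.mk.injEq]
      exact this
end

section
/- Let X be a finite set, let θ : X → X be an involution without fixed points, let C ⊆ X, and let σ : X∖C → X∖C be an involution of X∖C without fixed points. Let ≈ be the smallest equivalence relation on X such that α ≈ θ(α) for all α ∈ X and α ≈ σ(α) for all α ∈ X∖C. Then every equivalence class of ≈ that contains an element of C contains exactly two elements of C; consequently, the number of equivalence classes of ≈ meeting C equals |C|/2. -/
/-- Let `X` be a finite set, `θ : X → X` a fixed-point-free involution, `C ⊆ X`, and
`σ` a fixed-point-free involution of `X ∖ C`. Let `≈` be the smallest equivalence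
relation with `α ≈ θ α` (for all `α`) and `α ≈ σ α` (for `α ∉ C`). Then every
equivalence class of `≈` meeting `C` contains exactly two elements of `C`, and the
number of classes meeting `C` equals `|C| / 2`. -/
theorem stmt3 (X : Type*) [Finite X] (θ : X → X)
    (hθinv : Function.Involutive θ) (hθnf : ∀ x, θ x ≠ x)
    (C : Set X) (σ : {x : X // x ∉ C} → {x : X // x ∉ C})
    (hσinv : Function.Involutive σ) (hσnf : ∀ x, σ x ≠ x)
    (R : X → X → Prop)
    (hR : ∀ a b, R a b ↔ (θ a = b ∨ ∃ ha : a ∉ C, (σ ⟨a, ha⟩ : X) = b)) :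
    (∀ a ∈ C, ∃ b, b ∈ C ∧ b ≠ a ∧ Relation.EqvGen R a b ∧
      ∀ c ∈ C, Relation.EqvGen R a c → c = a ∨ c = b) ∧
    Nat.card ((fun a => Quot.mk R a) '' C) = Nat.card C / 2 := by
  classical
  -- extend σ to an involution π of X fixing C pointwise
  set π : X → X := fun x => if h : x ∈ C then x else (σ ⟨x, h⟩ : X) with hπ
  have hπC : ∀ x, x ∈ C → π x = x := fun x hx => dif_pos hx
  have hπnC : ∀ x (hx : x ∉ C), π x = (σ ⟨x, hx⟩ : X) := fun x hx => dif_neg hx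
  have hσmem : ∀ (y : {x : X // x ∉ C}), (σ y : X) ∉ C := fun y => (σ y).2
  have hπinv : Function.Involutive π := by
    intro x
    by_cases hx : x ∈ C
    · rw [hπC x hx, hπC x hx]
    · rw [hπnC x hx, hπnC _ (hσmem ⟨x, hx⟩)]
      have h1 : (⟨(σ ⟨x, hx⟩ : X), hσmem ⟨x, hx⟩⟩ : {x : X // x ∉ C}) = σ ⟨x, hx⟩ :=
        Subtype.coe_eta _ _
      rw [h1]
      exact congrArg Subtype.val (hσinv ⟨x, hx⟩)
  have hπfix : ∀ x, π x = x ↔ x ∈ C := by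
    intro x
    constructor
    · intro h
      by_contra hx
      rw [hπnC x hx] at h
      exact hσnf ⟨x, hx⟩ (Subtype.ext h)
    · exact hπC x
  let θe : Equiv.Perm X := Function.Involutive.toPerm θ hθinv
  let πe : Equiv.Perm X := Function.Involutive.toPerm π hπinv
  set ρ : Equiv.Perm X := θe * πe with hρdef
  have hρ : ∀ x, ρ x = θ (π x) := fun x => rfl
  have hρinv : ∀ x, ρ⁻¹ x = π (θ x) := by
    intro x
    have h1 : ρ (π (θ x)) = x := by
      show θ (π (π (θ x))) = x
      rw [hπinv (θ x)]; exact hθinv x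
    exact Equiv.Perm.inv_eq_iff_eq.mpr h1.symm
  have hπρ : ∀ x, π x = ρ⁻¹ (θ x) := by
    intro x; rw [hρinv (θ x), hθinv x]
  -- single step of the equivalence
  have hRθ : ∀ x, R x (θ x) := fun x => (hR x (θ x)).2 (Or.inl rfl)
  have hstep : ∀ x, Relation.EqvGen R x (ρ x) := by
    intro x
    have h2 : Relation.EqvGen R (π x) (θ (π x)) := Relation.EqvGen.rel _ _ (hRθ (π x))
    by_cases hx : x ∈ C
    · rw [hρ]; rw [hπC x hx] at h2 ⊢; exact h2
    · refine Relation.EqvGen.trans _ _ _ (Relation.EqvGen.rel _ _ ?_) h2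
      exact (hR x (π x)).2 (Or.inr ⟨hx, (hπnC x hx).symm⟩)
  have hpow : ∀ (x : X) (m : ℕ), Relation.EqvGen R x ((ρ ^ m) x) := by
    intro x m
    induction m with
    | zero => simpa using Relation.EqvGen.refl x
    | succ k ih =>
      have h1 : (ρ ^ (k + 1)) x = ρ ((ρ ^ k) x) := by
        rw [pow_succ', Equiv.Perm.mul_apply]
      rw [h1]
      exact Relation.EqvGen.trans _ _ _ ih (hstep _)
  -- conjugation identities
  have hconj1 : ∀ x, θ (ρ x) = ρ⁻¹ (θ x) := by
    intro x; rw [hρ, hθinv, hρinv, hθinv]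
  have hconj1' : ∀ x, θ (ρ⁻¹ x) = ρ (θ x) := by
    intro x; rw [hρinv, hρ]
  have hcomp : ∀ (j k : ℤ) (x : X), (ρ ^ j) ((ρ ^ k) x) = (ρ ^ (j + k)) x := by
    intro j k x; rw [zpow_add, Equiv.Perm.mul_apply]
  have hconj : ∀ (k : ℤ) (x : X), θ ((ρ ^ k) x) = (ρ ^ (-k)) (θ x) := by
    intro k
    induction k using Int.induction_on with
    | zero => simp
    | succ i ih =>
      intro x
      have h1 : (ρ ^ ((i : ℤ) + 1)) x = (ρ ^ (i : ℤ)) (ρ x) := by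
        rw [zpow_add_one, Equiv.Perm.mul_apply]
      rw [h1, ih (ρ x), hconj1]
      have h2 : (ρ ^ (-((i : ℤ) + 1))) (θ x) = (ρ ^ (-(i : ℤ))) (ρ⁻¹ (θ x)) := by
        rw [show (ρ⁻¹ : Equiv.Perm X) = ρ ^ (-1 : ℤ) by simp, hcomp]
        ring_nf
      rw [h2]
    | pred i ih =>
      intro x
      have h1 : (ρ ^ (-(i : ℤ) - 1)) x = (ρ ^ (-(i : ℤ))) (ρ⁻¹ x) := by
        rw [show (ρ⁻¹ : Equiv.Perm X) = ρ ^ (-1 : ℤ) by simp, hcomp]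
        ring_nf
      rw [h1, ih (ρ⁻¹ x), hconj1']
      have h2 : (ρ ^ (-(-(i : ℤ) - 1))) (θ x) = (ρ ^ ((i : ℤ))) (ρ (θ x)) := by
        rw [show ρ (θ x) = (ρ ^ (1 : ℤ)) (θ x) from by simp, hcomp]
        ring_nf
      rw [h2]
      simp only [neg_neg]
  -- characterization of the generated equivalence
  have hSchar : ∀ x y, Relation.EqvGen R x y →
      ∃ k : ℤ, y = (ρ ^ k) x ∨ y = (ρ ^ k) (θ x) := by
    intro x y h
    induction h with
    | rel u v huv =>
      rcases (hR u v).1 huv with h1 | ⟨hu, h1⟩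
      · exact ⟨0, Or.inr (by simp [← h1])⟩
      · refine ⟨-1, Or.inr ?_⟩
        have h2 : v = π u := by rw [hπnC u hu]; exact h1.symm
        rw [h2, hπρ u]
        simp
    | refl u => exact ⟨0, Or.inl (by simp)⟩
    | symm u v _ ih =>
      obtain ⟨k, h1 | h1⟩ := ih
      · refine ⟨-k, Or.inl ?_⟩
        rw [h1, hcomp]; simp
      · refine ⟨k, Or.inr ?_⟩
        have h2 : θ u = (ρ ^ (-k)) v := by
          rw [h1, hcomp]; simp
        have h3 : u = θ ((ρ ^ (-k)) v) := by rw [← h2, hθinv]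
        rw [h3, hconj]; simp
    | trans u v w _ _ ih1 ih2 =>
      obtain ⟨k, h1 | h1⟩ := ih1 <;> obtain ⟨j, h2 | h2⟩ := ih2
      · exact ⟨j + k, Or.inl (by rw [h2, h1, hcomp])⟩
      · refine ⟨j + -k, Or.inr ?_⟩
        rw [h2, h1, hconj, hcomp]
      · exact ⟨j + k, Or.inr (by rw [h2, h1, hcomp])⟩
      · refine ⟨j + -k, Or.inl ?_⟩
        rw [h2, h1, hconj, hθinv, hcomp]
  -- the main pairing statement
  have key : ∀ a ∈ C, ∃ b, b ∈ C ∧ b ≠ a ∧ Relation.EqvGen R a b ∧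
      ∀ c ∈ C, Relation.EqvGen R a c → c = a ∨ c = b := by
    intro a ha
    have hθa : ρ a = θ a := by rw [hρ, hπC a ha]
    have hper : a ∈ Function.periodicPts ρ := by
      refine ⟨orderOf ρ, orderOf_pos ρ, ?_⟩
      show ρ^[orderOf ρ] a = a
      rw [Equiv.Perm.iterate_eq_pow, pow_orderOf_eq_one]
      rfl
    set n : ℕ := Function.minimalPeriod ρ a with hned
    have hn : 0 < n := Function.minimalPeriod_pos_of_mem_periodicPts hper
    have hdvdN : ∀ m : ℕ, (ρ ^ m) a = a ↔ n ∣ m := by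
      intro m
      rw [← Function.isPeriodicPt_iff_minimalPeriod_dvd]
      constructor
      · intro h; show ρ^[m] a = a; rw [Equiv.Perm.iterate_eq_pow]; exact h
      · intro h
        have := h
        rw [Function.IsPeriodicPt, Function.IsFixedPt, Equiv.Perm.iterate_eq_pow] at this
        exact this
    have hdvdZ : ∀ k : ℤ, (ρ ^ k) a = a ↔ (n : ℤ) ∣ k := by
      intro k
      cases k with
      | ofNat m =>
        rw [Int.ofNat_eq_natCast, zpow_natCast, hdvdN, Int.natCast_dvd_natCast]
      | negSucc m =>
        rw [zpow_negSucc, Int.negSucc_eq, dvd_neg]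
        rw [show ((ρ ^ (m + 1))⁻¹) a = a ↔ a = (ρ ^ (m + 1)) a from Equiv.Perm.inv_eq_iff_eq]
        rw [eq_comm, hdvdN]
        exact Int.natCast_dvd_natCast.symm
    have heq2 : ∀ j k : ℤ, (ρ ^ j) a = (ρ ^ k) a ↔ (n : ℤ) ∣ (j - k) := by
      intro j k
      rw [← hdvdZ (j - k)]
      constructor
      · intro h
        have h1 : (ρ ^ (-k)) ((ρ ^ j) a) = (ρ ^ (-k)) ((ρ ^ k) a) := by rw [h]
        rw [hcomp, hcomp] at h1
        rw [show -k + j = j - k by ring] at h1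
        rw [show -k + k = 0 by ring] at h1
        simpa using h1
      · intro h
        have h1 : (ρ ^ k) ((ρ ^ (j - k)) a) = (ρ ^ k) a := by rw [h]
        rw [hcomp, show k + (j - k) = j by ring] at h1
        exact h1
    have hπpow : ∀ j : ℤ, π ((ρ ^ j) a) = (ρ ^ (-j)) a := by
      intro j
      rw [hπρ, hconj, hθa.symm]
      rw [show (ρ : Equiv.Perm X) a = (ρ ^ (1 : ℤ)) a by simp, hcomp]
      rw [show (ρ⁻¹ : Equiv.Perm X) = ρ ^ (-1 : ℤ) by simp, hcomp]
      ring_nf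
    have hmemC : ∀ j : ℤ, (ρ ^ j) a ∈ C ↔ (n : ℤ) ∣ 2 * j := by
      intro j
      rw [← hπfix, hπpow, heq2]
      rw [show -j - j = -(2 * j) by ring, dvd_neg]
    -- n is even
    have h2n : 2 ∣ n := by
      by_contra h2
      obtain ⟨m, hm⟩ : ∃ m, n = 2 * m + 1 := ⟨n / 2, by omega⟩
      have hj : (n : ℤ) ∣ 2 * ((m : ℤ) + 1) - 1 := by
        have : ((n : ℤ)) = 2 * (m : ℤ) + 1 := by exact_mod_cast hm
        rw [this]; ring_nf; exact ⟨1, by ring⟩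
      have heqx : (ρ ^ (1 - ((m : ℤ) + 1))) a = (ρ ^ ((m : ℤ) + 1)) a := by
        rw [heq2]
        rw [show 1 - ((m : ℤ) + 1) - ((m : ℤ) + 1) = -(2 * ((m : ℤ) + 1) - 1) by ring, dvd_neg]
        exact hj
      have hth : θ ((ρ ^ ((m : ℤ) + 1)) a) = (ρ ^ (1 - ((m : ℤ) + 1))) a := by
        rw [hconj, hθa.symm]
        rw [show (ρ : Equiv.Perm X) a = (ρ ^ (1 : ℤ)) a by simp, hcomp]
        ring_nf
      exact hθnf ((ρ ^ ((m : ℤ) + 1)) a) (by rw [hth, heqx])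
    obtain ⟨m, hm⟩ := h2n
    have hmpos : 0 < m := by omega
    refine ⟨(ρ ^ m) a, ?_, ?_, ?_, ?_⟩
    · rw [show ((ρ ^ m : Equiv.Perm X)) a = (ρ ^ (m : ℤ)) a by rw [zpow_natCast], hmemC]
      exact ⟨1, by push_cast [hm]; ring⟩
    · intro hba
      have : (ρ ^ (m : ℤ)) a = (ρ ^ (0 : ℤ)) a := by
        rw [zpow_natCast]; simpa using hba
      rw [heq2] at this
      have : (n : ℤ) ∣ (m : ℤ) := by simpa using this
      have hnm : n ∣ m := Int.ofNat_dvd.mp this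
      have := Nat.le_of_dvd hmpos hnm
      omega
    · exact hpow a m
    · intro c hc hac
      have huniq : ∀ j : ℤ, (ρ ^ j) a ∈ C → (ρ ^ j) a = a ∨ (ρ ^ j) a = (ρ ^ (m : ℤ)) a := by
        intro j hj
        have hdv : (n : ℤ) ∣ 2 * j := (hmemC j).1 hj
        have hdv2 : (2 * (m : ℤ)) ∣ 2 * j := by
          rw [show (2 * (m : ℤ)) = (n : ℤ) by exact_mod_cast hm.symm]; exact hdv
        obtain ⟨t, ht2⟩ := hdv2
        have ht : j = (m : ℤ) * t :=
          mul_left_cancel₀ two_ne_zero (by rw [ht2]; ring)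
        rcases Int.even_or_odd t with ⟨s, hs⟩ | ⟨s, hs⟩
        · left
          have hx0 : (ρ ^ j) a = (ρ ^ (0 : ℤ)) a := by
            rw [heq2]
            exact ⟨s, by rw [sub_zero, ht, hs]; push_cast [hm]; ring⟩
          simpa using hx0
        · right
          rw [heq2]
          exact ⟨s, by rw [ht, hs]; push_cast [hm]; ring⟩
      obtain ⟨k, h1 | h1⟩ := hSchar a c hac
      · have hjc : c = (ρ ^ k) a := h1
        rcases huniq k (by rw [← hjc]; exact hc) with h | h
        · left; rw [hjc, h]
        · right; rw [hjc, h, zpow_natCast]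
      · have hjc : c = (ρ ^ (k + 1)) a := by
          rw [h1, ← hθa, show (ρ : Equiv.Perm X) a = (ρ ^ (1 : ℤ)) a by simp, hcomp]
        rcases huniq (k + 1) (by rw [← hjc]; exact hc) with h | h
        · left; rw [hjc, h]
        · right; rw [hjc, h, zpow_natCast]
  refine ⟨key, ?_⟩
  -- counting
  choose f hfC hfne hfEqv hfuniq using key
  set Q : Set (Quot R) := (fun a => Quot.mk R a) '' C with hQ
  have hrep : ∀ q : Q, ∃ a, a ∈ C ∧ Quot.mk R a = (q : Quot R) := by
    rintro ⟨q, a, ha, rfl⟩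
    exact ⟨a, ha, rfl⟩
  choose r hrC hrq using hrep
  let g : Q × Bool → C := fun p =>
    match p.2 with
    | false => ⟨r p.1, hrC p.1⟩
    | true => ⟨f (r p.1) (hrC p.1), hfC _ _⟩
  have hgf : ∀ q : Q, (g (q, false) : X) = r q := fun q => rfl
  have hgt : ∀ q : Q, (g (q, true) : X) = f (r q) (hrC q) := fun q => rfl
  have hclass : ∀ (q : Q) (i : Bool), Quot.mk R ((g (q, i) : X)) = (q : Quot R) := by
    intro q i
    cases i
    · rw [hgf]; exact hrq q
    · rw [hgt]
      have h1 : Quot.mk R (r q) = Quot.mk R (f (r q) (hrC q)) :=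
        Quot.eqvGen_sound (hfEqv (r q) (hrC q))
      exact h1.symm.trans (hrq q)
  have hgbij : Function.Bijective g := by
    constructor
    · rintro ⟨q, i⟩ ⟨q', i'⟩ hgg
      have hx : ((g (q, i) : X)) = ((g (q', i') : X)) := by rw [hgg]
      have hq : q = q' := by
        have := (hclass q i).symm.trans ((by rw [hx] :
          Quot.mk R ((g (q, i) : X)) = Quot.mk R ((g (q', i') : X))).trans (hclass q' i'))
        exact Subtype.ext this
      subst hq
      have hi : i = i' := by
        cases i <;> cases i'
        · rfl
        · exfalso; rw [hgf, hgt] at hx; exact hfne (r q) (hrC q) hx.symm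
        · exfalso; rw [hgt, hgf] at hx; exact hfne (r q) (hrC q) hx
        · rfl
      rw [hi]
    · rintro ⟨c, hc⟩
      have hqmem : Quot.mk R c ∈ Q := ⟨c, hc, rfl⟩
      set q : Q := ⟨Quot.mk R c, hqmem⟩ with hq
      have hEq : Relation.EqvGen R (r q) c := Quot.eqvGen_exact (hrq q)
      rcases hfuniq (r q) (hrC q) c hc hEq with h | h
      · exact ⟨(q, false), Subtype.ext (by rw [hgf]; exact h.symm)⟩
      · exact ⟨(q, true), Subtype.ext (by rw [hgt]; exact h.symm)⟩
  have hcard : Nat.card (Q × Bool) = Nat.card C := Nat.card_eq_of_bijective g hgbij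
  rw [Nat.card_prod] at hcard
  have hbool : Nat.card Bool = 2 := by simp [Nat.card_eq_fintype_card]
  rw [hbool] at hcard
  show Nat.card Q = Nat.card C / 2
  omega
end

section
/- Let n ≥ 2 and let m_1,…,m_n be positive integers. If m_{i+1} = m_i for some 1 ≤ i ≤ n−1, then N([m_n,…,m_1]) = N([m_n,…,m_{i+1},m_{i−1},…,m_1]), where the right-hand side is the number of connected components of the up-and-down graph of the band dimension vector of length n−1 obtained by deleting the entry m_i. -/
/-- Color-free description of the edges of `UDGraph n β r r`. -/
def PathAdj (n : ℕ) (β r : ℕ → ℕ) (p q : ℕ × ℕ) : Prop :=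
  ∃ k j : ℕ, 1 ≤ k ∧ k ≤ n ∧ 1 ≤ j ∧ j ≤ r k ∧
    (((p = (k, j) ∧ q = (k - 1, j)) ∨ (q = (k, j) ∧ p = (k - 1, j))) ∨
      ((p = (k, β k + 1 - j) ∧ q = (k - 1, β (k - 1) + 1 - j)) ∨
        (q = (k, β k + 1 - j) ∧ p = (k - 1, β (k - 1) + 1 - j))))

lemma pathAdj_iff {n : ℕ} {β r : ℕ → ℕ} {p q : ℕ × ℕ} :
    RedAdj n β r p q ∨ BlueAdj n β r p q ↔ PathAdj n β r p q := by
  constructor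
  · rintro (⟨k, j, h1, h2, h3, h4, h5⟩ | ⟨k, j, h1, h2, h3, h4, h5⟩) <;>
      exact ⟨k, j, h1, h2, h3, h4, by tauto⟩
  · rintro ⟨k, j, h1, h2, h3, h4, h5⟩
    by_cases he : Even (n - k)
    · rcases h5 with h | h
      · exact Or.inl ⟨k, j, h1, h2, h3, h4, Or.inl ⟨he, h⟩⟩
      · exact Or.inr ⟨k, j, h1, h2, h3, h4, Or.inr ⟨he, h⟩⟩
    · rcases h5 with h | h
      · exact Or.inr ⟨k, j, h1, h2, h3, h4, Or.inl ⟨he, h⟩⟩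
      · exact Or.inl ⟨k, j, h1, h2, h3, h4, Or.inr ⟨he, h⟩⟩

lemma bandGraph_adj {n : ℕ} {m : ℕ → ℕ} {x y : UDVert n (bandBeta n m)} :
    (bandGraph n m).Adj x y ↔ x ≠ y ∧ PathAdj n (bandBeta n m) (bandM n m) x.1 y.1 :=
  and_congr_right fun _ => pathAdj_iff

lemma adj_of_pathAdj {n : ℕ} {m : ℕ → ℕ} {x y : UDVert n (bandBeta n m)}
    (hne : x.1 ≠ y.1) (h : PathAdj n (bandBeta n m) (bandM n m) x.1 y.1) :
    (bandGraph n m).Adj x y :=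
  bandGraph_adj.mpr ⟨fun e => hne (congrArg Subtype.val e), h⟩

lemma pair_ne_of_fst {a b c d : ℕ} (h : a ≠ c) : (a, b) ≠ (c, d) :=
  fun e => h (congrArg Prod.fst e)

open SimpleGraph in
lemma reachable_map {V W : Type*} {G : SimpleGraph V} {H : SimpleGraph W} {f : V → W}
    (hf : ∀ a b, G.Adj a b → H.Reachable (f a) (f b)) {a b : V} (h : G.Reachable a b) :
    H.Reachable (f a) (f b) := by
  obtain ⟨p⟩ := h
  induction p with
  | nil => exact Reachable.refl _
  | cons h p ih => exact (hf _ _ h).trans ih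

open SimpleGraph in
lemma card_components_eq {V W : Type*} {G : SimpleGraph V} {H : SimpleGraph W}
    (f : V → W) (g : W → V)
    (hf : ∀ a b, G.Adj a b → H.Reachable (f a) (f b))
    (hg : ∀ a b, H.Adj a b → G.Reachable (g a) (g b))
    (hgf : ∀ v, g (f v) = v)
    (hfg : ∀ w, H.Reachable (f (g w)) w) :
    Nat.card G.ConnectedComponent = Nat.card H.ConnectedComponent := by
  apply Nat.card_congr
  refine
    { toFun := ConnectedComponent.lift (fun v => H.connectedComponentMk (f v))
        (fun a b p _ => ConnectedComponent.sound (reachable_map hf ⟨p⟩))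
      invFun := ConnectedComponent.lift (fun w => G.connectedComponentMk (g w))
        (fun a b p _ => ConnectedComponent.sound (reachable_map hg ⟨p⟩))
      left_inv := ?_
      right_inv := ?_ }
  · refine ConnectedComponent.ind fun v => ?_
    simp [hgf]
  · refine ConnectedComponent.ind fun w => ?_
    simp only [ConnectedComponent.lift_mk]
    exact ConnectedComponent.sound (hfg w)

/-- The vertex map from the contracted graph back into the original graph. -/
def fVert (n i : ℕ) (β β' : ℕ → ℕ) (hn : 1 ≤ n)
    (hb1 : ∀ k, k < i → β' k = β k) (hb2 : ∀ k, i ≤ k → β' k = β (k + 1)) :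
    UDVert (n - 1) β' → UDVert n β := fun v =>
  if h : v.1.1 < i then
    ⟨v.1, by obtain ⟨a, b, c⟩ := v.2; exact ⟨by omega, b, by rwa [hb1 _ h] at c⟩⟩
  else
    ⟨(v.1.1 + 1, v.1.2), by
      obtain ⟨a, b, c⟩ := v.2
      exact ⟨by omega, b, by rwa [hb2 _ (by omega)] at c⟩⟩

lemma fVert_val (n i : ℕ) (β β' : ℕ → ℕ) (hn : 1 ≤ n)
    (hb1 : ∀ k, k < i → β' k = β k) (hb2 : ∀ k, i ≤ k → β' k = β (k + 1))
    (v : UDVert (n - 1) β') :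
    (fVert n i β β' hn hb1 hb2 v).1 =
      if v.1.1 < i then v.1 else (v.1.1 + 1, v.1.2) := by
  by_cases h : v.1.1 < i
  · rw [if_pos h]; exact congrArg Subtype.val (dif_pos h)
  · rw [if_neg h]; exact congrArg Subtype.val (dif_neg h)

/-- The vertex map from the original graph to the contracted graph. -/
def rhoVert (n i Mi : ℕ) (β β' : ℕ → ℕ) (hi1 : 1 ≤ i) (hi2 : i ≤ n - 1)
    (hb1 : ∀ k, k < i → β' k = β k) (hb2 : ∀ k, i ≤ k → β' k = β (k + 1))
    (hbi : β i = Mi + Mi) (hMi1 : Mi ≤ β (i - 1)) :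
    UDVert n β → UDVert (n - 1) β' := fun v =>
  if h : v.1.1 < i then
    ⟨v.1, by obtain ⟨a, b, c⟩ := v.2; exact ⟨by omega, b, by rwa [hb1 _ h]⟩⟩
  else if h' : v.1.1 = i then
    (if hj : v.1.2 ≤ Mi then
      ⟨(i - 1, v.1.2), by
        obtain ⟨a, b, c⟩ := v.2
        refine ⟨by omega, b, ?_⟩
        show v.1.2 ≤ β' (i - 1)
        rw [hb1 _ (by omega)]; omega⟩
     else
      ⟨(i - 1, v.1.2 - Mi + (β (i - 1) - Mi)), by
        obtain ⟨a, b, c⟩ := v.2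
        rw [h', hbi] at c
        refine ⟨by omega, by omega, ?_⟩
        show v.1.2 - Mi + (β (i - 1) - Mi) ≤ β' (i - 1)
        rw [hb1 _ (by omega)]; omega⟩)
  else
    ⟨(v.1.1 - 1, v.1.2), by
      obtain ⟨a, b, c⟩ := v.2
      refine ⟨by omega, b, ?_⟩
      rw [hb2 _ (by omega)]
      have h'' : v.1.1 - 1 + 1 = v.1.1 := by omega
      rw [h'']; exact c⟩

lemma rhoVert_val (n i Mi : ℕ) (β β' : ℕ → ℕ) (hi1 : 1 ≤ i) (hi2 : i ≤ n - 1)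
    (hb1 : ∀ k, k < i → β' k = β k) (hb2 : ∀ k, i ≤ k → β' k = β (k + 1))
    (hbi : β i = Mi + Mi) (hMi1 : Mi ≤ β (i - 1)) (v : UDVert n β) :
    (rhoVert n i Mi β β' hi1 hi2 hb1 hb2 hbi hMi1 v).1 =
      if v.1.1 < i then v.1
      else if v.1.1 = i then
        (if v.1.2 ≤ Mi then (i - 1, v.1.2)
         else (i - 1, v.1.2 - Mi + (β (i - 1) - Mi)))
      else (v.1.1 - 1, v.1.2) := by
  by_cases h : v.1.1 < i
  · simp [rhoVert, h]
  · by_cases h' : v.1.1 = i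
    · by_cases hj : v.1.2 ≤ Mi
      · simp [rhoVert, h, h', hj]
      · simp [rhoVert, h, h', hj]
    · simp [rhoVert, h, h']
/-- If `m (i+1) = m i`, deleting the entry `m i` does not change the number of connected
components of the up-and-down graph of the band dimension vector. -/
theorem stmt4 (n : ℕ) (hn : 2 ≤ n) (m : ℕ → ℕ)
    (hpos : ∀ i, 1 ≤ i → i ≤ n → 0 < m i)
    (i : ℕ) (hi1 : 1 ≤ i) (hi2 : i ≤ n - 1) (heq : m (i + 1) = m i) :
    NBand n m = NBand (n - 1) (fun j => if j < i then m j else m (j + 1)) := by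
  classical
  have hn1 : 1 ≤ n := by omega
  set m' : ℕ → ℕ := fun j => if j < i then m j else m (j + 1) with hm'
  have hMi : bandM n m (i + 1) = bandM n m i := by
    simp only [bandM]
    rw [if_pos (by omega : 1 ≤ i + 1 ∧ i + 1 ≤ n), if_pos (by omega : 1 ≤ i ∧ i ≤ n)]
    exact heq
  have hM' : ∀ k, bandM (n - 1) m' k = if k < i then bandM n m k else bandM n m (k + 1) := by
    intro k
    simp only [bandM, hm']
    split_ifs <;> first | rfl | omega
  have hb1 : ∀ k, k < i → bandBeta (n - 1) m' k = bandBeta n m k := by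
    intro k hk
    simp only [bandBeta, hM']
    rw [if_pos hk]
    by_cases h : k + 1 < i
    · rw [if_pos h]
    · have hki : k + 1 = i := by omega
      rw [if_neg h, hki, hMi]
  have hb2 : ∀ k, i ≤ k → bandBeta (n - 1) m' k = bandBeta n m (k + 1) := by
    intro k hk
    simp only [bandBeta, hM']
    rw [if_neg (by omega), if_neg (by omega)]
  have hbi : bandBeta n m i = bandM n m i + bandM n m i := by
    simp only [bandBeta, hMi]
  have hMipos : 1 ≤ bandM n m i := by
    simp only [bandM]
    rw [if_pos (by omega : 1 ≤ i ∧ i ≤ n)]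
    exact hpos i hi1 (by omega)
  have hMi1 : bandM n m i ≤ bandBeta n m (i - 1) := by
    have h : i - 1 + 1 = i := by omega
    simp only [bandBeta, h]
    omega
  set Fv := fVert n i (bandBeta n m) (bandBeta (n - 1) m') hn1 hb1 hb2 with hFv
  set Rv := rhoVert n i (bandM n m i) (bandBeta n m) (bandBeta (n - 1) m')
    hi1 hi2 hb1 hb2 hbi hMi1 with hRv
  -- values of the maps
  have hFval : ∀ v, (Fv v).1 = if v.1.1 < i then v.1 else (v.1.1 + 1, v.1.2) := by
    intro v; rw [hFv, fVert_val]
  have hRval : ∀ v, (Rv v).1 =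
      if v.1.1 < i then v.1
      else if v.1.1 = i then
        (if v.1.2 ≤ bandM n m i then (i - 1, v.1.2)
         else (i - 1, v.1.2 - bandM n m i + (bandBeta n m (i - 1) - bandM n m i)))
      else (v.1.1 - 1, v.1.2) := by
    intro v; rw [hRv, rhoVert_val]
  -- ρ ∘ f = id
  have hgf : ∀ v, Rv (Fv v) = v := by
    intro v
    apply Subtype.ext
    rw [hRval]
    by_cases h : v.1.1 < i
    · have hF : (Fv v).1 = v.1 := by rw [hFval, if_pos h]
      rw [hF, if_pos h]
    · have hF : (Fv v).1 = (v.1.1 + 1, v.1.2) := by rw [hFval, if_neg h]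
      rw [hF]
      have h1 : ¬ ((v.1.1 + 1, v.1.2).1 < i) := by dsimp only; omega
      have h2 : ¬ ((v.1.1 + 1, v.1.2).1 = i) := by dsimp only; omega
      rw [if_neg h1, if_neg h2]
      show (v.1.1 + 1 - 1, v.1.2) = v.1
      have h3 : v.1.1 + 1 - 1 = v.1.1 := by omega
      rw [h3]
  -- f (ρ w) is reachable from w
  have hfg : ∀ w, (bandGraph n m).Reachable (Fv (Rv w)) w := by
    intro w
    by_cases h : w.1.1 < i
    · have hR : (Rv w).1 = w.1 := by rw [hRval, if_pos h]
      have hFR : Fv (Rv w) = w := by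
        apply Subtype.ext; rw [hFval, hR, if_pos h]
      rw [hFR]
    · by_cases h' : w.1.1 = i
      · obtain ⟨ha, hb, hc⟩ := w.2
        rw [h'] at hc
        rw [hbi] at hc
        by_cases hj : w.1.2 ≤ bandM n m i
        · have hR : (Rv w).1 = (i - 1, w.1.2) := by
            rw [hRval, if_neg h, if_pos h', if_pos hj]
          have hF : (Fv (Rv w)).1 = (i - 1, w.1.2) := by
            rw [hFval, hR]; dsimp only; rw [if_pos (by omega : i - 1 < i)]
          apply SimpleGraph.Adj.reachable
          apply adj_of_pathAdj
          · rw [hF]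
            intro e
            have := congrArg Prod.fst e
            dsimp only at this
            omega
          · have hw : w.1 = (i, w.1.2) := by rw [← h']
            exact ⟨i, w.1.2, hi1, by omega, hb, hj, Or.inl (Or.inr ⟨hw, hF⟩)⟩
        · have hR : (Rv w).1 =
              (i - 1, w.1.2 - bandM n m i + (bandBeta n m (i - 1) - bandM n m i)) := by
            rw [hRval, if_neg h, if_pos h', if_neg hj]
          have hF : (Fv (Rv w)).1 =
              (i - 1, w.1.2 - bandM n m i + (bandBeta n m (i - 1) - bandM n m i)) := by
            rw [hFval, hR]; dsimp only; rw [if_pos (by omega : i - 1 < i)]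
          set j0 : ℕ := bandBeta n m i + 1 - w.1.2 with hj0
          have e1 : bandBeta n m i + 1 - j0 = w.1.2 := by omega
          have e2 : bandBeta n m (i - 1) + 1 - j0 =
              w.1.2 - bandM n m i + (bandBeta n m (i - 1) - bandM n m i) := by omega
          apply SimpleGraph.Adj.reachable
          apply adj_of_pathAdj
          · rw [hF]
            intro e
            have := congrArg Prod.fst e
            dsimp only at this
            omega
          · have hw : w.1 = (i, bandBeta n m i + 1 - j0) := by rw [e1, ← h']
            refine ⟨i, j0, hi1, by omega, by omega, by omega,
              Or.inr (Or.inr ⟨hw, ?_⟩)⟩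
            rw [hF, e2]
      · have hR : (Rv w).1 = (w.1.1 - 1, w.1.2) := by
          rw [hRval, if_neg h, if_neg h']
        have hFR : Fv (Rv w) = w := by
          apply Subtype.ext
          rw [hFval, hR]
          dsimp only
          rw [if_neg (by omega : ¬ (w.1.1 - 1 < i))]
          have e : w.1.1 - 1 + 1 = w.1.1 := by omega
          rw [e]
        rw [hFR]
  -- f maps edges to reachability
  have hFadj : ∀ a b, (bandGraph (n - 1) m').Adj a b →
      (bandGraph n m).Reachable (Fv a) (Fv b) := by
    have key : ∀ (a b : UDVert (n - 1) (bandBeta (n - 1) m')) (k j : ℕ),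
        1 ≤ k → k ≤ n - 1 → 1 ≤ j → j ≤ bandM (n - 1) m' k →
        ((a.1 = (k, j) ∧ b.1 = (k - 1, j)) ∨
          (a.1 = (k, bandBeta (n - 1) m' k + 1 - j) ∧
            b.1 = (k - 1, bandBeta (n - 1) m' (k - 1) + 1 - j))) →
        (bandGraph n m).Reachable (Fv a) (Fv b) := by
      rintro a b k j hk1 hk2 hj1 hj2 (⟨ha, hb⟩ | ⟨ha, hb⟩)
      -- head form
      · by_cases hki : k < i
        · have hj2' : j ≤ bandM n m k := by rwa [hM', if_pos hki] at hj2
          have hFa : (Fv a).1 = (k, j) := by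
            rw [hFval, ha]; dsimp only; rw [if_pos hki]
          have hFb : (Fv b).1 = (k - 1, j) := by
            rw [hFval, hb]; dsimp only; rw [if_pos (by omega : k - 1 < i)]
          apply SimpleGraph.Adj.reachable
          apply adj_of_pathAdj
          · rw [hFa, hFb]; exact pair_ne_of_fst (by omega)
          · exact ⟨k, j, hk1, by omega, hj1, hj2', Or.inl (Or.inl ⟨hFa, hFb⟩)⟩
        · by_cases hki2 : k = i
          · rw [hki2] at ha hb hj2
            have hj2' : j ≤ bandM n m (i + 1) := by
              rwa [hM', if_neg (lt_irrefl i)] at hj2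
            have hj2'' : j ≤ bandM n m i := by rwa [hMi] at hj2'
            have hFa : (Fv a).1 = (i + 1, j) := by
              rw [hFval, ha]; dsimp only; rw [if_neg (lt_irrefl i)]
            have hFb : (Fv b).1 = (i - 1, j) := by
              rw [hFval, hb]; dsimp only; rw [if_pos (by omega : i - 1 < i)]
            have hw : (i, j).1 ≤ n ∧ 1 ≤ (i, j).2 ∧ (i, j).2 ≤ bandBeta n m (i, j).1 := by
              refine ⟨by omega, hj1, ?_⟩
              show j ≤ bandBeta n m i
              omega
            have adj1 : (bandGraph n m).Adj (Fv a) ⟨(i, j), hw⟩ := by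
              apply adj_of_pathAdj
              · rw [hFa]; exact pair_ne_of_fst (by omega)
              · refine ⟨i + 1, j, by omega, by omega, hj1, hj2', Or.inl (Or.inl ⟨hFa, ?_⟩)⟩
                show ((i, j) : ℕ × ℕ) = (i + 1 - 1, j)
                rw [Nat.add_sub_cancel]
            have adj2 : (bandGraph n m).Adj ⟨(i, j), hw⟩ (Fv b) := by
              apply adj_of_pathAdj
              · rw [hFb]; exact pair_ne_of_fst (by omega : i ≠ i - 1)
              · exact ⟨i, j, hi1, by omega, hj1, hj2'', Or.inl (Or.inl ⟨rfl, hFb⟩)⟩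
            exact adj1.reachable.trans adj2.reachable
          · -- k > i
            have hk3 : i + 1 ≤ k := by omega
            have ek : k - 1 + 1 = k := by omega
            have hj2' : j ≤ bandM n m (k + 1) := by
              rwa [hM', if_neg (by omega : ¬ (k < i))] at hj2
            have hFa : (Fv a).1 = (k + 1, j) := by
              rw [hFval, ha]; dsimp only; rw [if_neg (by omega : ¬ (k < i))]
            have hFb : (Fv b).1 = (k + 1 - 1, j) := by
              rw [hFval, hb]; dsimp only
              rw [if_neg (by omega : ¬ (k - 1 < i)), ek, Nat.add_sub_cancel]
            apply SimpleGraph.Adj.reachable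
            apply adj_of_pathAdj
            · rw [hFa, hFb]; exact pair_ne_of_fst (by omega)
            · exact ⟨k + 1, j, by omega, by omega, hj1, hj2', Or.inl (Or.inl ⟨hFa, hFb⟩)⟩
      -- tail form
      · by_cases hki : k < i
        · rw [hb1 k hki] at ha
          rw [hb1 (k - 1) (by omega : k - 1 < i)] at hb
          have hj2' : j ≤ bandM n m k := by rwa [hM', if_pos hki] at hj2
          have hFa : (Fv a).1 = (k, bandBeta n m k + 1 - j) := by
            rw [hFval, ha]; dsimp only; rw [if_pos hki]
          have hFb : (Fv b).1 = (k - 1, bandBeta n m (k - 1) + 1 - j) := by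
            rw [hFval, hb]; dsimp only; rw [if_pos (by omega : k - 1 < i)]
          apply SimpleGraph.Adj.reachable
          apply adj_of_pathAdj
          · rw [hFa, hFb]; exact pair_ne_of_fst (by omega)
          · exact ⟨k, j, hk1, by omega, hj1, hj2', Or.inr (Or.inl ⟨hFa, hFb⟩)⟩
        · by_cases hki2 : k = i
          · rw [hki2] at ha hb hj2
            rw [hb2 i le_rfl] at ha
            rw [hb1 (i - 1) (by omega : i - 1 < i)] at hb
            have hj2' : j ≤ bandM n m (i + 1) := by
              rwa [hM', if_neg (lt_irrefl i)] at hj2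
            have hj2'' : j ≤ bandM n m i := by rwa [hMi] at hj2'
            have hFa : (Fv a).1 = (i + 1, bandBeta n m (i + 1) + 1 - j) := by
              rw [hFval, ha]; dsimp only; rw [if_neg (lt_irrefl i)]
            have hFb : (Fv b).1 = (i - 1, bandBeta n m (i - 1) + 1 - j) := by
              rw [hFval, hb]; dsimp only; rw [if_pos (by omega : i - 1 < i)]
            have hw : (i, bandBeta n m i + 1 - j).1 ≤ n ∧
                1 ≤ (i, bandBeta n m i + 1 - j).2 ∧
                (i, bandBeta n m i + 1 - j).2 ≤
                  bandBeta n m (i, bandBeta n m i + 1 - j).1 := by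
              refine ⟨by omega, ?_, ?_⟩
              · show 1 ≤ bandBeta n m i + 1 - j
                omega
              · show bandBeta n m i + 1 - j ≤ bandBeta n m i
                omega
            have adj1 : (bandGraph n m).Adj (Fv a) ⟨(i, bandBeta n m i + 1 - j), hw⟩ := by
              apply adj_of_pathAdj
              · rw [hFa]; exact pair_ne_of_fst (by omega)
              · refine ⟨i + 1, j, by omega, by omega, hj1, hj2',
                  Or.inr (Or.inl ⟨hFa, ?_⟩)⟩
                show ((i, bandBeta n m i + 1 - j) : ℕ × ℕ) =
                  (i + 1 - 1, bandBeta n m (i + 1 - 1) + 1 - j)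
                rw [Nat.add_sub_cancel]
            have adj2 : (bandGraph n m).Adj ⟨(i, bandBeta n m i + 1 - j), hw⟩ (Fv b) := by
              apply adj_of_pathAdj
              · rw [hFb]; exact pair_ne_of_fst (by omega : i ≠ i - 1)
              · exact ⟨i, j, hi1, by omega, hj1, hj2'', Or.inr (Or.inl ⟨rfl, hFb⟩)⟩
            exact adj1.reachable.trans adj2.reachable
          · have hk3 : i + 1 ≤ k := by omega
            have ek : k - 1 + 1 = k := by omega
            rw [hb2 k (by omega : i ≤ k)] at ha
            have hbb : bandBeta (n - 1) m' (k - 1) = bandBeta n m k := by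
              rw [hb2 (k - 1) (by omega : i ≤ k - 1), ek]
            rw [hbb] at hb
            have hj2' : j ≤ bandM n m (k + 1) := by
              rwa [hM', if_neg (by omega : ¬ (k < i))] at hj2
            have hFa : (Fv a).1 = (k + 1, bandBeta n m (k + 1) + 1 - j) := by
              rw [hFval, ha]; dsimp only; rw [if_neg (by omega : ¬ (k < i))]
            have hFb : (Fv b).1 = (k + 1 - 1, bandBeta n m (k + 1 - 1) + 1 - j) := by
              rw [hFval, hb]; dsimp only
              rw [if_neg (by omega : ¬ (k - 1 < i)), ek, Nat.add_sub_cancel]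
            apply SimpleGraph.Adj.reachable
            apply adj_of_pathAdj
            · rw [hFa, hFb]; exact pair_ne_of_fst (by omega)
            · exact ⟨k + 1, j, by omega, by omega, hj1, hj2', Or.inr (Or.inl ⟨hFa, hFb⟩)⟩
    intro a b hab
    obtain ⟨-, k, j, h1, h2, h3, h4, hd⟩ := bandGraph_adj.mp hab
    rcases hd with (⟨ha, hb⟩ | ⟨hb, ha⟩) | (⟨ha, hb⟩ | ⟨hb, ha⟩)
    · exact key a b k j h1 h2 h3 h4 (Or.inl ⟨ha, hb⟩)
    · exact (key b a k j h1 h2 h3 h4 (Or.inl ⟨hb, ha⟩)).symm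
    · exact key a b k j h1 h2 h3 h4 (Or.inr ⟨ha, hb⟩)
    · exact (key b a k j h1 h2 h3 h4 (Or.inr ⟨hb, ha⟩)).symm
  -- ρ maps edges to reachability
  have hRadj : ∀ a b, (bandGraph n m).Adj a b →
      (bandGraph (n - 1) m').Reachable (Rv a) (Rv b) := by
    have key : ∀ (a b : UDVert n (bandBeta n m)) (k j : ℕ), 1 ≤ k → k ≤ n → 1 ≤ j →
        j ≤ bandM n m k →
        ((a.1 = (k, j) ∧ b.1 = (k - 1, j)) ∨
          (a.1 = (k, bandBeta n m k + 1 - j) ∧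
            b.1 = (k - 1, bandBeta n m (k - 1) + 1 - j))) →
        (bandGraph (n - 1) m').Reachable (Rv a) (Rv b) := by
      rintro a b k j hk1 hk2 hj1 hj2 (⟨ha, hb⟩ | ⟨ha, hb⟩)
      -- head form
      · by_cases hki : k < i
        · have hRa : (Rv a).1 = (k, j) := by
            rw [hRval, ha]; dsimp only; rw [if_pos hki]
          have hRb : (Rv b).1 = (k - 1, j) := by
            rw [hRval, hb]; dsimp only; rw [if_pos (by omega : k - 1 < i)]
          apply SimpleGraph.Adj.reachable
          apply adj_of_pathAdj
          · rw [hRa, hRb]; exact pair_ne_of_fst (by omega)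
          · refine ⟨k, j, hk1, by omega, hj1, ?_, Or.inl (Or.inl ⟨hRa, hRb⟩)⟩
            rw [hM', if_pos hki]; exact hj2
        · by_cases hki2 : k = i
          · rw [hki2] at ha hb hj2
            have hRa : (Rv a).1 = (i - 1, j) := by
              rw [hRval, ha]; dsimp only
              rw [if_neg (lt_irrefl i), if_pos rfl, if_pos hj2]
            have hRb : (Rv b).1 = (i - 1, j) := by
              rw [hRval, hb]; dsimp only; rw [if_pos (by omega : i - 1 < i)]
            have hab : Rv a = Rv b := Subtype.ext (by rw [hRa, hRb])
            rw [hab]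
          · by_cases hki3 : k = i + 1
            · rw [hki3] at ha hb hj2
              simp only [Nat.add_sub_cancel] at hb
              have hj2' : j ≤ bandM n m i := by rw [← hMi]; exact hj2
              have hRa : (Rv a).1 = (i, j) := by
                rw [hRval, ha]; dsimp only
                rw [if_neg (by omega : ¬ (i + 1 < i)), if_neg (by omega : ¬ (i + 1 = i))]
                rw [Nat.add_sub_cancel]
              have hRb : (Rv b).1 = (i - 1, j) := by
                rw [hRval, hb]; dsimp only
                rw [if_neg (lt_irrefl i), if_pos rfl, if_pos hj2']
              apply SimpleGraph.Adj.reachable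
              apply adj_of_pathAdj
              · rw [hRa, hRb]; exact pair_ne_of_fst (by omega)
              · refine ⟨i, j, hi1, hi2, hj1, ?_, Or.inl (Or.inl ⟨hRa, hRb⟩)⟩
                rw [hM', if_neg (lt_irrefl i)]; exact hj2
            · -- k ≥ i + 2
              have hk4 : i + 2 ≤ k := by omega
              have hRa : (Rv a).1 = (k - 1, j) := by
                rw [hRval, ha]; dsimp only
                rw [if_neg (by omega : ¬ (k < i)), if_neg (by omega : ¬ (k = i))]
              have hRb : (Rv b).1 = (k - 1 - 1, j) := by
                rw [hRval, hb]; dsimp only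
                rw [if_neg (by omega : ¬ (k - 1 < i)), if_neg (by omega : ¬ (k - 1 = i))]
              apply SimpleGraph.Adj.reachable
              apply adj_of_pathAdj
              · rw [hRa, hRb]; exact pair_ne_of_fst (by omega)
              · refine ⟨k - 1, j, by omega, by omega, hj1, ?_, Or.inl (Or.inl ⟨hRa, hRb⟩)⟩
                rw [hM', if_neg (by omega : ¬ (k - 1 < i))]
                have ek : k - 1 + 1 = k := by omega
                rw [ek]; exact hj2
      -- tail form
      · by_cases hki : k < i
        · have hRa : (Rv a).1 = (k, bandBeta (n - 1) m' k + 1 - j) := by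
            rw [hRval, ha]; dsimp only; rw [if_pos hki, hb1 k hki]
          have hRb : (Rv b).1 = (k - 1, bandBeta (n - 1) m' (k - 1) + 1 - j) := by
            rw [hRval, hb]; dsimp only
            rw [if_pos (by omega : k - 1 < i), hb1 (k - 1) (by omega)]
          apply SimpleGraph.Adj.reachable
          apply adj_of_pathAdj
          · rw [hRa, hRb]; exact pair_ne_of_fst (by omega)
          · refine ⟨k, j, hk1, by omega, hj1, ?_, Or.inr (Or.inl ⟨hRa, hRb⟩)⟩
            rw [hM', if_pos hki]; exact hj2
        · by_cases hki2 : k = i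
          · rw [hki2] at ha hb hj2
            have hc1 : ¬ (bandBeta n m i + 1 - j ≤ bandM n m i) := by omega
            have hRa : (Rv a).1 =
                (i - 1, (bandBeta n m i + 1 - j) - bandM n m i +
                  (bandBeta n m (i - 1) - bandM n m i)) := by
              rw [hRval, ha]; dsimp only
              rw [if_neg (lt_irrefl i), if_pos rfl, if_neg hc1]
            have hRb : (Rv b).1 = (i - 1, bandBeta n m (i - 1) + 1 - j) := by
              rw [hRval, hb]; dsimp only; rw [if_pos (by omega : i - 1 < i)]
            have e : (bandBeta n m i + 1 - j) - bandM n m i +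
                (bandBeta n m (i - 1) - bandM n m i) = bandBeta n m (i - 1) + 1 - j := by
              omega
            have hab : Rv a = Rv b := Subtype.ext (by rw [hRa, hRb, e])
            rw [hab]
          · by_cases hki3 : k = i + 1
            · rw [hki3] at ha hb hj2
              simp only [Nat.add_sub_cancel] at hb
              have hj2' : j ≤ bandM n m i := by rw [← hMi]; exact hj2
              have hc1 : ¬ (bandBeta n m i + 1 - j ≤ bandM n m i) := by omega
              have hRa : (Rv a).1 = (i, bandBeta (n - 1) m' i + 1 - j) := by
                rw [hRval, ha]; dsimp only
                rw [if_neg (by omega : ¬ (i + 1 < i)), if_neg (by omega : ¬ (i + 1 = i))]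
                rw [Nat.add_sub_cancel, hb2 i le_rfl]
              have hRb : (Rv b).1 = (i - 1, bandBeta (n - 1) m' (i - 1) + 1 - j) := by
                rw [hRval, hb]; dsimp only
                rw [if_neg (lt_irrefl i), if_pos rfl, if_neg hc1]
                rw [hb1 (i - 1) (by omega)]
                have e : (bandBeta n m i + 1 - j) - bandM n m i +
                    (bandBeta n m (i - 1) - bandM n m i) =
                    bandBeta n m (i - 1) + 1 - j := by omega
                rw [e]
              apply SimpleGraph.Adj.reachable
              apply adj_of_pathAdj
              · rw [hRa, hRb]; exact pair_ne_of_fst (by omega)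
              · refine ⟨i, j, hi1, hi2, hj1, ?_, Or.inr (Or.inl ⟨hRa, hRb⟩)⟩
                rw [hM', if_neg (lt_irrefl i)]; exact hj2
            · have hk4 : i + 2 ≤ k := by omega
              have ek : k - 1 + 1 = k := by omega
              have ek2 : k - 1 - 1 + 1 = k - 1 := by omega
              have hRa : (Rv a).1 = (k - 1, bandBeta (n - 1) m' (k - 1) + 1 - j) := by
                rw [hRval, ha]; dsimp only
                rw [if_neg (by omega : ¬ (k < i)), if_neg (by omega : ¬ (k = i))]
                rw [hb2 (k - 1) (by omega), ek]
              have hRb : (Rv b).1 = (k - 1 - 1, bandBeta (n - 1) m' (k - 1 - 1) + 1 - j) := by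
                rw [hRval, hb]; dsimp only
                rw [if_neg (by omega : ¬ (k - 1 < i)), if_neg (by omega : ¬ (k - 1 = i))]
                rw [hb2 (k - 1 - 1) (by omega), ek2]
              apply SimpleGraph.Adj.reachable
              apply adj_of_pathAdj
              · rw [hRa, hRb]; exact pair_ne_of_fst (by omega)
              · refine ⟨k - 1, j, by omega, by omega, hj1, ?_, Or.inr (Or.inl ⟨hRa, hRb⟩)⟩
                rw [hM', if_neg (by omega : ¬ (k - 1 < i)), ek]; exact hj2
    intro a b hab
    obtain ⟨-, k, j, h1, h2, h3, h4, hd⟩ := bandGraph_adj.mp hab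
    rcases hd with (⟨ha, hb⟩ | ⟨hb, ha⟩) | (⟨ha, hb⟩ | ⟨hb, ha⟩)
    · exact key a b k j h1 h2 h3 h4 (Or.inl ⟨ha, hb⟩)
    · exact (key b a k j h1 h2 h3 h4 (Or.inl ⟨hb, ha⟩)).symm
    · exact key a b k j h1 h2 h3 h4 (Or.inr ⟨ha, hb⟩)
    · exact (key b a k j h1 h2 h3 h4 (Or.inr ⟨hb, ha⟩)).symm
  show Nat.card (bandGraph n m).ConnectedComponent =
    Nat.card (bandGraph (n - 1) m').ConnectedComponent
  exact (card_components_eq Fv Rv hFadj hRadj hgf hfg).symm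
end

section
/- Let n ≥ 3 and let m_1,…,m_n be positive integers. If m_i > m_{i−1} = m_{i+1} for some 2 ≤ i ≤ n−1, then N([m_n,…,m_1]) = (m_i − m_{i−1}) + N([m_n,…,m_{i+1}, m_{i+1}, m_{i−1},…,m_1]), i.e. replacing the entry m_i by m_{i+1} decreases the number of connected components of the up-and-down graph by exactly m_i − m_{i−1}. -/
namespace UD6

/-- one-sided ("p on top") description of an uncolored edge, in coordinates -/
def HalfAdj (n : ℕ) (β r : ℕ → ℕ) (p q : ℕ × ℕ) : Prop :=
  ∃ k j : ℕ, 1 ≤ k ∧ k ≤ n ∧ 1 ≤ j ∧ j ≤ r k ∧ p.1 = k ∧ q.1 = k - 1 ∧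
    ((p.2 = j ∧ q.2 = j) ∨ (p.2 = β k + 1 - j ∧ q.2 = β (k - 1) + 1 - j))

lemma redblue_iff {n : ℕ} {β r : ℕ → ℕ} {p q : ℕ × ℕ} :
    (RedAdj n β r p q ∨ BlueAdj n β r p q) ↔
      (HalfAdj n β r p q ∨ HalfAdj n β r q p) := by
  constructor
  · rintro (⟨k, j, h1, h2, h3, h4, h5⟩ | ⟨k, j, h1, h2, h3, h4, h5⟩) <;>
    · rcases h5 with ⟨hpar, hpat⟩ | ⟨hpar, hpat⟩ <;> rcases hpat with ⟨hx, hy⟩ | ⟨hx, hy⟩ <;>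
        subst hx <;> subst hy <;>
        first
          | exact Or.inl ⟨k, j, h1, h2, h3, h4, rfl, rfl, Or.inl ⟨rfl, rfl⟩⟩
          | exact Or.inr ⟨k, j, h1, h2, h3, h4, rfl, rfl, Or.inl ⟨rfl, rfl⟩⟩
          | exact Or.inl ⟨k, j, h1, h2, h3, h4, rfl, rfl, Or.inr ⟨rfl, rfl⟩⟩
          | exact Or.inr ⟨k, j, h1, h2, h3, h4, rfl, rfl, Or.inr ⟨rfl, rfl⟩⟩
  · rintro (⟨k, j, h1, h2, h3, h4, e1, e2, hpat⟩ | ⟨k, j, h1, h2, h3, h4, e1, e2, hpat⟩) <;>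
      rcases hpat with ⟨f1, f2⟩ | ⟨f1, f2⟩ <;>
      rcases Nat.even_or_odd (n - k) with he | ho
    · exact Or.inl ⟨k, j, h1, h2, h3, h4,
        Or.inl ⟨he, Or.inl ⟨Prod.ext_iff.mpr ⟨e1, f1⟩, Prod.ext_iff.mpr ⟨e2, f2⟩⟩⟩⟩
    · exact Or.inr ⟨k, j, h1, h2, h3, h4,
        Or.inl ⟨Nat.not_even_iff_odd.mpr ho, Or.inl ⟨Prod.ext_iff.mpr ⟨e1, f1⟩, Prod.ext_iff.mpr ⟨e2, f2⟩⟩⟩⟩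
    · exact Or.inr ⟨k, j, h1, h2, h3, h4,
        Or.inr ⟨he, Or.inl ⟨Prod.ext_iff.mpr ⟨e1, f1⟩, Prod.ext_iff.mpr ⟨e2, f2⟩⟩⟩⟩
    · exact Or.inl ⟨k, j, h1, h2, h3, h4,
        Or.inr ⟨Nat.not_even_iff_odd.mpr ho, Or.inl ⟨Prod.ext_iff.mpr ⟨e1, f1⟩, Prod.ext_iff.mpr ⟨e2, f2⟩⟩⟩⟩
    · exact Or.inl ⟨k, j, h1, h2, h3, h4,
        Or.inl ⟨he, Or.inr ⟨Prod.ext_iff.mpr ⟨e1, f1⟩, Prod.ext_iff.mpr ⟨e2, f2⟩⟩⟩⟩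
    · exact Or.inr ⟨k, j, h1, h2, h3, h4,
        Or.inl ⟨Nat.not_even_iff_odd.mpr ho, Or.inr ⟨Prod.ext_iff.mpr ⟨e1, f1⟩, Prod.ext_iff.mpr ⟨e2, f2⟩⟩⟩⟩
    · exact Or.inr ⟨k, j, h1, h2, h3, h4,
        Or.inr ⟨he, Or.inr ⟨Prod.ext_iff.mpr ⟨e1, f1⟩, Prod.ext_iff.mpr ⟨e2, f2⟩⟩⟩⟩
    · exact Or.inl ⟨k, j, h1, h2, h3, h4,
        Or.inr ⟨Nat.not_even_iff_odd.mpr ho, Or.inr ⟨Prod.ext_iff.mpr ⟨e1, f1⟩, Prod.ext_iff.mpr ⟨e2, f2⟩⟩⟩⟩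

lemma band_adj {n : ℕ} {m : ℕ → ℕ} {x y : UDVert n (bandBeta n m)} :
    (bandGraph n m).Adj x y ↔ x ≠ y ∧
      (HalfAdj n (bandBeta n m) (bandM n m) x.1 y.1 ∨
        HalfAdj n (bandBeta n m) (bandM n m) y.1 x.1) :=
  and_congr_right fun _ => redblue_iff

instance (n : ℕ) (β : ℕ → ℕ) : Finite (UDVert n β) := by
  apply Finite.of_injective
    (fun x : UDVert n β =>
      ((⟨x.1.1, Nat.lt_succ_of_le x.2.1⟩ : Fin (n + 1)),
       (⟨x.1.2, Nat.lt_succ_of_le (le_trans x.2.2.2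
          (Finset.le_sup (Finset.mem_range.mpr (Nat.lt_succ_of_le x.2.1))))⟩ :
          Fin ((Finset.range (n + 1)).sup β + 1))))
  intro x y h
  simp only [Prod.mk.injEq, Fin.mk.injEq] at h
  exact Subtype.ext (Prod.ext_iff.mpr h)


/-- the position shift: on levels `i-1`, `i`, positions above `a` get shifted up by `b - a`. -/
def gp (i a b : ℕ) (p : ℕ × ℕ) : ℕ × ℕ :=
  (p.1, if (p.1 = i - 1 ∨ p.1 = i) ∧ a < p.2 then p.2 + (b - a) else p.2)

lemma gp_inj (i a b : ℕ) (hab : a < b) {p q : ℕ × ℕ} (h : gp i a b p = gp i a b q) :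
    p = q := by
  rw [Prod.ext_iff] at h ⊢
  simp only [gp] at h
  obtain ⟨h1, h2⟩ := h
  refine ⟨h1, ?_⟩
  split_ifs at h2 <;> omega

/-- bundled arithmetic context -/
structure Ctx (n i a b : ℕ) (m m' : ℕ → ℕ) : Prop where
  hi1 : 2 ≤ i
  hi2 : i + 1 ≤ n
  hab : a < b
  h1a : 1 ≤ a
  hM1 : bandM n m (i - 1) = a
  hM2 : bandM n m i = b
  hM3 : bandM n m (i + 1) = a
  hM1' : bandM n m' (i - 1) = a
  hM2' : bandM n m' i = a
  hM3' : bandM n m' (i + 1) = a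
  hMle : ∀ k, bandM n m' k ≤ bandM n m k
  hMeq : ∀ k, k ≠ i → bandM n m' k = bandM n m k
  hB1 : bandBeta n m (i - 1) = a + b
  hB2 : bandBeta n m i = a + b
  hB1' : bandBeta n m' (i - 1) = a + a
  hB2' : bandBeta n m' i = a + a
  hBeq : ∀ k, k ≠ i - 1 → k ≠ i → bandBeta n m' k = bandBeta n m k

lemma mkCtx (n i a b : ℕ) (m m' : ℕ → ℕ)
    (hi1 : 2 ≤ i) (hi2 : i + 1 ≤ n)
    (ha : m (i - 1) = a) (hb : m i = b) (ha' : m (i + 1) = a)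
    (hab : a < b) (h1a : 1 ≤ a)
    (hm' : ∀ j, m' j = if j = i then m (i + 1) else m j) :
    Ctx n i a b m m' := by
  have hM1 : bandM n m (i - 1) = a := by
    simp only [bandM]; rw [if_pos (by omega : 1 ≤ i - 1 ∧ i - 1 ≤ n)]; exact ha
  have hM2 : bandM n m i = b := by
    simp only [bandM]; rw [if_pos (by omega : 1 ≤ i ∧ i ≤ n)]; exact hb
  have hM3 : bandM n m (i + 1) = a := by
    simp only [bandM]; rw [if_pos (by omega : 1 ≤ i + 1 ∧ i + 1 ≤ n)]; exact ha'
  have hM1' : bandM n m' (i - 1) = a := by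
    simp only [bandM]; rw [if_pos (by omega : 1 ≤ i - 1 ∧ i - 1 ≤ n), hm',
      if_neg (by omega : ¬(i - 1 = i))]; exact ha
  have hM2' : bandM n m' i = a := by
    simp only [bandM]; rw [if_pos (by omega : 1 ≤ i ∧ i ≤ n), hm', if_pos rfl]; exact ha'
  have hM3' : bandM n m' (i + 1) = a := by
    simp only [bandM]; rw [if_pos (by omega : 1 ≤ i + 1 ∧ i + 1 ≤ n), hm',
      if_neg (by omega : ¬(i + 1 = i))]; exact ha'
  have hMeq : ∀ k, k ≠ i → bandM n m' k = bandM n m k := by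
    intro k hk; simp only [bandM, hm', if_neg hk]
  have hMle : ∀ k, bandM n m' k ≤ bandM n m k := by
    intro k
    by_cases hk : k = i
    · subst hk; omega
    · rw [hMeq k hk]
  have hBeq : ∀ k, k ≠ i - 1 → k ≠ i → bandBeta n m' k = bandBeta n m k := by
    intro k h1 h2
    simp only [bandBeta]
    rw [hMeq k h2, hMeq (k + 1) (by omega)]
  have e : i - 1 + 1 = i := by omega
  have hB1 : bandBeta n m (i - 1) = a + b := by simp only [bandBeta]; rw [e]; omega
  have hB2 : bandBeta n m i = a + b := by simp only [bandBeta]; omega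
  have hB1' : bandBeta n m' (i - 1) = a + a := by simp only [bandBeta]; rw [e]; omega
  have hB2' : bandBeta n m' i = a + a := by simp only [bandBeta]; omega
  exact ⟨hi1, hi2, hab, h1a, hM1, hM2, hM3, hM1', hM2', hM3', hMle, hMeq,
    hB1, hB2, hB1', hB2', hBeq⟩

section Main
variable {n i a b : ℕ} {m m' : ℕ → ℕ}

set_option maxHeartbeats 1000000 in
lemma dead_edge (hc : Ctx n i a b m m') {p q : ℕ × ℕ}
    (hp1 : p.1 = i - 1 ∨ p.1 = i) (hp2 : a < p.2) (hp3 : p.2 ≤ b)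
    (h : HalfAdj n (bandBeta n m) (bandM n m) p q ∨
         HalfAdj n (bandBeta n m) (bandM n m) q p) :
    (q.1 = i - 1 ∨ q.1 = i) ∧ q.2 = p.2 := by
  have hi1 := hc.hi1
  have hab := hc.hab
  have hM1 := hc.hM1
  have hM2 := hc.hM2
  have hM3 := hc.hM3
  have hB1 := hc.hB1
  have hB2 := hc.hB2
  clear hc
  rcases h with ⟨k, j, hk1, hk2, hj1, hj2, e1, e2, pat⟩ |
      ⟨k, j, hk1, hk2, hj1, hj2, e1, e2, pat⟩
  · -- p on top : p.1 = k
    have hk : k = i - 1 ∨ k = i := by omega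
    rcases hk with rfl | rfl
    · clear * - hp1 hp2 hp3 hj2 hM1 hB1 pat hi1 hab
      rcases pat with ⟨f1, f2⟩ | ⟨f1, f2⟩ <;> omega
    · clear * - hp1 hp2 hp3 hj2 hM2 hB1 hB2 pat e2 hi1 hab
      rcases pat with ⟨f1, f2⟩ | ⟨f1, f2⟩ <;> exact ⟨Or.inl (by omega), by omega⟩
  · -- q on top : q.1 = k, p.1 = k - 1
    have hk : k = i ∨ k = i + 1 := by omega
    rcases hk with rfl | rfl
    · clear * - hp1 hp2 hp3 hj2 hM2 hB1 hB2 pat e1 hi1 hab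
      rcases pat with ⟨f1, f2⟩ | ⟨f1, f2⟩ <;> exact ⟨Or.inr (by omega), by omega⟩
    · have hx : bandBeta n m (i + 1 - 1) = a + b := by
        rw [(by omega : i + 1 - 1 = i)]; exact hB2
      clear * - hp1 hp2 hp3 hj2 hM3 hx pat e2 hi1 hab
      rcases pat with ⟨f1, f2⟩ | ⟨f1, f2⟩ <;> omega

set_option maxHeartbeats 1000000 in
lemma backward_half (hc : Ctx n i a b m m') {p q : ℕ × ℕ}
    (h : HalfAdj n (bandBeta n m') (bandM n m') p q) :
    HalfAdj n (bandBeta n m) (bandM n m) (gp i a b p) (gp i a b q) := by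
  have hi1 := hc.hi1
  have hab := hc.hab
  have h1a := hc.h1a
  obtain ⟨k, j, hk1, hk2, hj1, hj2, e1, e2, pat⟩ := h
  refine ⟨k, j, hk1, hk2, hj1, le_trans hj2 (hc.hMle k), by simpa [gp] using e1,
    by simpa [gp] using e2, ?_⟩
  simp only [gp]
  have hk4 : k = i - 1 ∨ k = i ∨ k = i + 1 ∨ (k ≠ i - 1 ∧ k ≠ i ∧ k ≠ i + 1) := by omega
  rcases hk4 with rfl | hki | rfl | ⟨u1, u2, u3⟩
  · have e5 : bandBeta n m' (i - 1 - 1) = bandBeta n m (i - 1 - 1) :=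
      hc.hBeq _ (by omega) (by omega)
    have hM1' := hc.hM1'
    have hB1 := hc.hB1
    have hB1' := hc.hB1'
    clear * - e1 e2 pat hj1 hj2 hM1' hB1 hB1' e5 hi1 hab h1a
    rcases pat with ⟨f1, f2⟩ | ⟨f1, f2⟩
    · refine Or.inl ⟨?_, ?_⟩ <;> (split_ifs <;> omega)
    · refine Or.inr ⟨?_, ?_⟩ <;> (split_ifs <;> omega)
  · have g1 : bandM n m' k = a := by rw [hki]; exact hc.hM2'
    have g3 : bandBeta n m k = a + b := by rw [hki]; exact hc.hB2
    have g4 : bandBeta n m' k = a + a := by rw [hki]; exact hc.hB2'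
    have g5 : bandBeta n m (k - 1) = a + b := by rw [hki]; exact hc.hB1
    have g6 : bandBeta n m' (k - 1) = a + a := by rw [hki]; exact hc.hB1'
    clear * - e1 e2 pat hj1 hj2 g1 g3 g4 g5 g6 hki hi1 hab h1a
    rcases pat with ⟨f1, f2⟩ | ⟨f1, f2⟩
    · refine Or.inl ⟨?_, ?_⟩ <;> (split_ifs <;> omega)
    · refine Or.inr ⟨?_, ?_⟩ <;> (split_ifs <;> omega)
  · have e5 : bandBeta n m' (i + 1) = bandBeta n m (i + 1) := hc.hBeq _ (by omega) (by omega)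
    have e6 : bandBeta n m (i + 1 - 1) = a + b := by
      rw [(by omega : i + 1 - 1 = i)]; exact hc.hB2
    have e7 : bandBeta n m' (i + 1 - 1) = a + a := by
      rw [(by omega : i + 1 - 1 = i)]; exact hc.hB2'
    have hM3' := hc.hM3'
    clear * - e1 e2 pat hj1 hj2 hM3' e5 e6 e7 hi1 hab h1a
    rcases pat with ⟨f1, f2⟩ | ⟨f1, f2⟩
    · refine Or.inl ⟨?_, ?_⟩ <;> (split_ifs <;> omega)
    · refine Or.inr ⟨?_, ?_⟩ <;> (split_ifs <;> omega)
  · have e5 : bandBeta n m' k = bandBeta n m k := hc.hBeq _ u1 u2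
    have e6 : bandBeta n m' (k - 1) = bandBeta n m (k - 1) := hc.hBeq _ (by omega) (by omega)
    have e7 : bandM n m' k = bandM n m k := hc.hMeq _ u2
    clear * - e1 e2 pat hj1 hj2 e5 e6 e7 u1 u2 u3 hi1 hab h1a
    rcases pat with ⟨f1, f2⟩ | ⟨f1, f2⟩
    · refine Or.inl ⟨?_, ?_⟩ <;> (split_ifs <;> omega)
    · refine Or.inr ⟨?_, ?_⟩ <;> (split_ifs <;> omega)

set_option maxHeartbeats 1000000 in
lemma forward_half (hc : Ctx n i a b m m') {p q : ℕ × ℕ}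
    (hp : p.1 ≤ n ∧ 1 ≤ p.2 ∧ p.2 ≤ bandBeta n m' p.1)
    (hq : q.1 ≤ n ∧ 1 ≤ q.2 ∧ q.2 ≤ bandBeta n m' q.1)
    (h : HalfAdj n (bandBeta n m) (bandM n m) (gp i a b p) (gp i a b q)) :
    HalfAdj n (bandBeta n m') (bandM n m') p q := by
  have hi1 := hc.hi1
  have hab := hc.hab
  have h1a := hc.h1a
  obtain ⟨k, j, hk1, hk2, hj1, hj2, e1, e2, pat⟩ := h
  simp only [gp] at e1 e2 pat
  rw [e1] at hp
  rw [e2] at hq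
  have hk4 : k = i - 1 ∨ k = i ∨ k = i + 1 ∨ (k ≠ i - 1 ∧ k ≠ i ∧ k ≠ i + 1) := by omega
  rcases hk4 with rfl | hki | rfl | ⟨u1, u2, u3⟩
  · have e5 : bandBeta n m' (i - 1 - 1) = bandBeta n m (i - 1 - 1) :=
      hc.hBeq _ (by omega) (by omega)
    have hM1 := hc.hM1
    have hM1' := hc.hM1'
    have hB1 := hc.hB1
    have hB1' := hc.hB1'
    clear * - e1 e2 pat hp hq hk1 hk2 hj1 hj2 hM1 hM1' hB1 hB1' e5 hi1 hab h1a
    rcases pat with ⟨f1, f2⟩ | ⟨f1, f2⟩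
    · split_ifs at f1 f2 <;>
        exact ⟨i - 1, j, hk1, hk2, hj1, by omega, e1, e2, Or.inl ⟨by omega, by omega⟩⟩
    · split_ifs at f1 f2 <;>
        exact ⟨i - 1, j, hk1, hk2, hj1, by omega, e1, e2, Or.inr ⟨by omega, by omega⟩⟩
  · have g1 : bandM n m k = b := by rw [hki]; exact hc.hM2
    have g2 : bandM n m' k = a := by rw [hki]; exact hc.hM2'
    have g3 : bandBeta n m k = a + b := by rw [hki]; exact hc.hB2
    have g4 : bandBeta n m' k = a + a := by rw [hki]; exact hc.hB2'
    have g5 : bandBeta n m (k - 1) = a + b := by rw [hki]; exact hc.hB1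
    have g6 : bandBeta n m' (k - 1) = a + a := by rw [hki]; exact hc.hB1'
    clear * - e1 e2 pat hp hq hk1 hk2 hj1 hj2 g1 g2 g3 g4 g5 g6 hki hi1 hab h1a
    rcases pat with ⟨f1, f2⟩ | ⟨f1, f2⟩
    · split_ifs at f1 f2 <;>
        exact ⟨k, j, hk1, hk2, hj1, by omega, e1, e2, Or.inl ⟨by omega, by omega⟩⟩
    · split_ifs at f1 f2 <;>
        exact ⟨k, j, hk1, hk2, hj1, by omega, e1, e2, Or.inr ⟨by omega, by omega⟩⟩
  · have e5 : bandBeta n m' (i + 1) = bandBeta n m (i + 1) := hc.hBeq _ (by omega) (by omega)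
    have e6 : bandBeta n m (i + 1 - 1) = a + b := by
      rw [(by omega : i + 1 - 1 = i)]; exact hc.hB2
    have e7 : bandBeta n m' (i + 1 - 1) = a + a := by
      rw [(by omega : i + 1 - 1 = i)]; exact hc.hB2'
    have hM3 := hc.hM3
    have hM3' := hc.hM3'
    clear * - e1 e2 pat hp hq hk1 hk2 hj1 hj2 hM3 hM3' e5 e6 e7 hi1 hab h1a
    rcases pat with ⟨f1, f2⟩ | ⟨f1, f2⟩
    · split_ifs at f1 f2 <;>
        exact ⟨i + 1, j, hk1, hk2, hj1, by omega, e1, e2, Or.inl ⟨by omega, by omega⟩⟩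
    · split_ifs at f1 f2 <;>
        exact ⟨i + 1, j, hk1, hk2, hj1, by omega, e1, e2, Or.inr ⟨by omega, by omega⟩⟩
  · have e5 : bandBeta n m' k = bandBeta n m k := hc.hBeq _ u1 u2
    have e6 : bandBeta n m' (k - 1) = bandBeta n m (k - 1) := hc.hBeq _ (by omega) (by omega)
    have e7 : bandM n m' k = bandM n m k := hc.hMeq _ u2
    clear * - e1 e2 pat hp hq hk1 hk2 hj1 hj2 e5 e6 e7 u1 u2 u3 hi1 hab h1a
    rcases pat with ⟨f1, f2⟩ | ⟨f1, f2⟩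
    · split_ifs at f1 f2 <;>
        exact ⟨k, j, hk1, hk2, hj1, by omega, e1, e2, Or.inl ⟨by omega, by omega⟩⟩
    · split_ifs at f1 f2 <;>
        exact ⟨k, j, hk1, hk2, hj1, by omega, e1, e2, Or.inr ⟨by omega, by omega⟩⟩

end Main



lemma walk_const {V : Type*} {G : SimpleGraph V} {β : Sort*} {f : V → β}
    (hf : ∀ v w, G.Adj v w → f v = f w) {v w : V} (p : G.Walk v w) : f v = f w := by
  induction p with
  | nil => rfl
  | cons h q ih => exact (hf _ _ h).trans ih

lemma gp_mk_shift (i a b L t : ℕ) (h1 : L = i - 1 ∨ L = i) (h2 : a < t) :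
    gp i a b (L, t) = (L, t + (b - a)) := by
  unfold gp
  rw [if_pos (show ((L, t).1 = i - 1 ∨ (L, t).1 = i) ∧ a < (L, t).2 from ⟨h1, h2⟩)]

lemma gp_mk_self (i a b L t : ℕ) (h : ¬((L = i - 1 ∨ L = i) ∧ a < t)) :
    gp i a b (L, t) = (L, t) := by
  unfold gp
  rw [if_neg (show ¬(((L, t).1 = i - 1 ∨ (L, t).1 = i) ∧ a < (L, t).2) from h)]

set_option maxHeartbeats 1000000 in
theorem key (n i a b : ℕ) (m m' : ℕ → ℕ) (hm1 : 1 ≤ m' 1)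
    (hc : Ctx n i a b m m') :
    Nat.card (bandGraph n m).ConnectedComponent
      = (b - a) + Nat.card (bandGraph n m').ConnectedComponent := by
  classical
  have hi1 := hc.hi1
  have hi2 := hc.hi2
  have hab := hc.hab
  have h1a := hc.h1a
  -- V' is nonempty
  haveI hne : Nonempty (UDVert n (bandBeta n m')) := by
    refine ⟨⟨(0, 1), by omega, by omega, ?_⟩⟩
    show 1 ≤ bandBeta n m' 0
    have e : bandBeta n m' 0 = bandM n m' 0 + bandM n m' 1 := rfl
    have e2 : bandM n m' 1 = m' 1 := by
      simp only [bandM]; rw [if_pos ⟨le_refl 1, by omega⟩]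
    omega
  -- the vertex embedding
  have hbound : ∀ u : UDVert n (bandBeta n m'), (gp i a b u.1).1 ≤ n ∧
      1 ≤ (gp i a b u.1).2 ∧ (gp i a b u.1).2 ≤ bandBeta n m (gp i a b u.1).1 := by
    intro u
    obtain ⟨hL, h1, h2⟩ := u.2
    simp only [gp]
    split_ifs with hcnd
    · refine ⟨hL, by omega, ?_⟩
      rcases hcnd.1 with h | h <;> rw [h] <;> rw [h] at h2
      · have := hc.hB1; have := hc.hB1'; omega
      · have := hc.hB2; have := hc.hB2'; omega
    · refine ⟨hL, by omega, ?_⟩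
      by_cases h : u.1.1 = i - 1
      · rw [h] at h2 ⊢; have := hc.hB1; have := hc.hB1'; omega
      · by_cases h' : u.1.1 = i
        · rw [h'] at h2 ⊢; have := hc.hB2; have := hc.hB2'; omega
        · rw [← hc.hBeq u.1.1 h h']; exact h2
  obtain ⟨gvert, hgv⟩ : ∃ g : UDVert n (bandBeta n m') → UDVert n (bandBeta n m),
      ∀ u, (g u).1 = gp i a b u.1 := ⟨fun u => ⟨_, hbound u⟩, fun _ => rfl⟩
  have hginj : Function.Injective gvert := by
    intro u v h
    have h' : (gvert u).1 = (gvert v).1 := congrArg Subtype.val h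
    rw [hgv, hgv] at h'
    exact Subtype.ext (gp_inj i a b hab h')
  -- adjacency transfer
  have hAdj : ∀ u v, (bandGraph n m').Adj u v ↔ (bandGraph n m).Adj (gvert u) (gvert v) := by
    intro u v
    rw [band_adj, band_adj]
    constructor
    · rintro ⟨hne', h⟩
      refine ⟨fun e => hne' (hginj e), ?_⟩
      rw [hgv, hgv]
      rcases h with h | h
      · exact Or.inl (backward_half hc h)
      · exact Or.inr (backward_half hc h)
    · rintro ⟨hne', h⟩
      refine ⟨fun e => hne' (by rw [e]), ?_⟩
      rw [hgv, hgv] at h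
      rcases h with h | h
      · exact Or.inl (forward_half hc u.2 v.2 h)
      · exact Or.inr (forward_half hc v.2 u.2 h)
  -- live vertices are in the range of gvert
  have hlive : ∀ x : UDVert n (bandBeta n m),
      ¬((x.1.1 = i - 1 ∨ x.1.1 = i) ∧ a < x.1.2 ∧ x.1.2 ≤ b) → ∃ u, gvert u = x := by
    rintro ⟨⟨L, t⟩, hL, h1, h2⟩ hx
    replace hx : ¬((L = i - 1 ∨ L = i) ∧ a < t ∧ t ≤ b) := hx
    replace h2 : t ≤ bandBeta n m L := h2
    by_cases hlv : L = i - 1 ∨ L = i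
    · by_cases hp : t ≤ a
      · refine ⟨⟨(L, t), hL, h1, ?_⟩, ?_⟩
        · show t ≤ bandBeta n m' L
          rcases hlv with h | h <;> rw [h]
          · have := hc.hB1'; omega
          · have := hc.hB2'; omega
        · refine Subtype.ext ?_
          refine (hgv _).trans ?_
          exact gp_mk_self i a b L t (by omega)
      · -- here a < t, so since not dead, b < t
        have hbt : b < t := by
          rcases hlv with h | h <;> omega
        refine ⟨⟨(L, t - (b - a)), hL, by omega, ?_⟩, ?_⟩
        · show t - (b - a) ≤ bandBeta n m' L
          rcases hlv with h | h <;> rw [h] <;> rw [h] at h2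
          · have := hc.hB1; have := hc.hB1'; omega
          · have := hc.hB2; have := hc.hB2'; omega
        · refine Subtype.ext ?_
          refine (hgv _).trans ((gp_mk_shift i a b L (t - (b - a)) hlv (by omega)).trans ?_)
          show (L, t - (b - a) + (b - a)) = (L, t)
          rw [Prod.mk.injEq]
          exact ⟨rfl, by omega⟩
    · refine ⟨⟨(L, t), hL, h1, ?_⟩, ?_⟩
      · show t ≤ bandBeta n m' L
        rw [hc.hBeq L (by tauto) (by tauto)]
        exact h2
      · refine Subtype.ext ?_
        refine (hgv _).trans ?_
        exact gp_mk_self i a b L t (by tauto)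
  -- the classifying function
  obtain ⟨c, hc1, hc2⟩ : ∃ c : UDVert n (bandBeta n m) →
        (Fin (b - a) ⊕ (bandGraph n m').ConnectedComponent),
      (∀ x, ((x.1.1 = i - 1 ∨ x.1.1 = i) ∧ a < x.1.2 ∧ x.1.2 ≤ b) →
        c x = Sum.inl ⟨min (x.1.2 - (a + 1)) (b - a - 1), by omega⟩) ∧
      (∀ x, ¬((x.1.1 = i - 1 ∨ x.1.1 = i) ∧ a < x.1.2 ∧ x.1.2 ≤ b) →
        c x = Sum.inr ((bandGraph n m').connectedComponentMk (Function.invFun gvert x))) := by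
    refine ⟨fun x => if h : ((x.1.1 = i - 1 ∨ x.1.1 = i) ∧ a < x.1.2 ∧ x.1.2 ≤ b)
      then Sum.inl ⟨min (x.1.2 - (a + 1)) (b - a - 1), by omega⟩
      else Sum.inr ((bandGraph n m').connectedComponentMk (Function.invFun gvert x)),
      fun x h => dif_pos h, fun x h => dif_neg h⟩
  have hdead_comp : ∀ x y, (bandGraph n m).Adj x y →
      ((x.1.1 = i - 1 ∨ x.1.1 = i) ∧ a < x.1.2 ∧ x.1.2 ≤ b) →
      ((y.1.1 = i - 1 ∨ y.1.1 = i) ∧ a < y.1.2 ∧ y.1.2 ≤ b) ∧ y.1.2 = x.1.2 := by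
    intro x y hxy hdx
    have h := (band_adj.mp hxy).2
    have hres := dead_edge hc hdx.1 hdx.2.1 hdx.2.2 h
    exact ⟨⟨hres.1, by omega, by omega⟩, hres.2⟩
  have hconst : ∀ x y, (bandGraph n m).Adj x y → c x = c y := by
    intro x y hxy
    by_cases hdx : (x.1.1 = i - 1 ∨ x.1.1 = i) ∧ a < x.1.2 ∧ x.1.2 ≤ b
    · obtain ⟨hdy, hyx⟩ := hdead_comp x y hxy hdx
      rw [hc1 x hdx, hc1 y hdy]
      simp only [hyx]
    · by_cases hdy : (y.1.1 = i - 1 ∨ y.1.1 = i) ∧ a < y.1.2 ∧ y.1.2 ≤ b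
      · exact absurd (hdead_comp y x hxy.symm hdy).1 hdx
      · rw [hc2 x hdx, hc2 y hdy]
        congr 1
        apply SimpleGraph.ConnectedComponent.connectedComponentMk_eq_of_adj
        rw [hAdj, Function.invFun_eq (hlive x hdx), Function.invFun_eq (hlive y hdy)]
        exact hxy
  -- the dead vertices
  obtain ⟨dv, hdv⟩ : ∃ d : Fin (b - a) → UDVert n (bandBeta n m),
      ∀ k, (d k).1 = (i, a + 1 + k.1) := by
    have hdb : ∀ k : Fin (b - a), i ≤ n ∧ 1 ≤ a + 1 + k.1 ∧ a + 1 + k.1 ≤ bandBeta n m i := by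
      intro k
      have := hc.hB2
      have := k.isLt
      omega
    exact ⟨fun k => ⟨_, hdb k⟩, fun _ => rfl⟩
  -- the component equivalence
  have main : Nat.card (bandGraph n m).ConnectedComponent
      = Nat.card (Fin (b - a) ⊕ (bandGraph n m').ConnectedComponent) := by
    apply Nat.card_congr
    refine ⟨SimpleGraph.ConnectedComponent.lift c (fun v w p _ => walk_const hconst p),
      Sum.elim (fun k => (bandGraph n m).connectedComponentMk (dv k))
        (SimpleGraph.ConnectedComponent.lift
          (fun u => (bandGraph n m).connectedComponentMk (gvert u))
          (fun u v p _ => walk_const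
            (fun u v h => SimpleGraph.ConnectedComponent.connectedComponentMk_eq_of_adj ((hAdj u v).mp h)) p)),
      ?_, ?_⟩
    · -- left inverse
      apply SimpleGraph.ConnectedComponent.ind
      intro x
      rw [SimpleGraph.ConnectedComponent.lift_mk]
      by_cases hdx : (x.1.1 = i - 1 ∨ x.1.1 = i) ∧ a < x.1.2 ∧ x.1.2 ≤ b
      · rw [hc1 x hdx]
        simp only [Sum.elim_inl]
        have h1 : a + 1 + min (x.1.2 - (a + 1)) (b - a - 1) = x.1.2 := by omega
        have ed := hdv ⟨min (x.1.2 - (a + 1)) (b - a - 1), by omega⟩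
        rcases hdx.1 with hlvl | hlvl
        · apply SimpleGraph.ConnectedComponent.connectedComponentMk_eq_of_adj
          rw [band_adj]
          constructor
          · intro e
            have h2 := congrArg Prod.fst (congrArg Subtype.val e)
            rw [ed] at h2
            simp only at h2
            omega
          · left
            have := hc.hM2
            refine ⟨i, x.1.2, by omega, by omega, by omega, by omega, ?_, ?_, Or.inl ⟨?_, rfl⟩⟩
            · rw [ed]
            · exact hlvl
            · rw [ed]; exact h1
        · congr 1
          refine Subtype.ext ?_
          rw [ed]
          rw [Prod.mk.injEq]
          exact ⟨hlvl.symm, h1⟩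
      · rw [hc2 x hdx]
        simp only [Sum.elim_inr, SimpleGraph.ConnectedComponent.lift_mk]
        rw [Function.invFun_eq (hlive x hdx)]
    · -- right inverse
      rintro (k | cc)
      · simp only [Sum.elim_inl]
        rw [SimpleGraph.ConnectedComponent.lift_mk]
        have e := hdv k
        have e1 : (dv k).1.1 = i := by rw [e]
        have e2 : (dv k).1.2 = a + 1 + k.1 := by rw [e]
        have hklt := k.isLt
        have hdk : ((dv k).1.1 = i - 1 ∨ (dv k).1.1 = i) ∧ a < (dv k).1.2 ∧ (dv k).1.2 ≤ b :=
          ⟨Or.inr e1, by omega, by omega⟩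
        rw [hc1 _ hdk]
        congr 1
        apply Fin.ext
        show min ((dv k).1.2 - (a + 1)) (b - a - 1) = k.1
        rw [e2]
        omega
      · revert cc
        apply SimpleGraph.ConnectedComponent.ind
        intro u
        simp only [Sum.elim_inr, SimpleGraph.ConnectedComponent.lift_mk]
        have hnd : ¬(((gvert u).1.1 = i - 1 ∨ (gvert u).1.1 = i) ∧
            a < (gvert u).1.2 ∧ (gvert u).1.2 ≤ b) := by
          rw [hgv]
          simp only [gp]
          split_ifs with h0 <;> omega
        rw [hc2 _ hnd]
        congr 2
        exact Function.leftInverse_invFun hginj u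
  haveI : Finite (bandGraph n m').ConnectedComponent := Quot.finite _
  rw [main, Nat.card_sum, Nat.card_eq_fintype_card, Fintype.card_fin]

end UD6

/-- If `m i > m (i-1) = m (i+1)`, then replacing the entry `m i` by `m (i+1)` decreases
the number of connected components of the up-and-down graph by exactly `m i - m (i-1)`. -/
theorem stmt6 (n : ℕ) (hn : 3 ≤ n) (m : ℕ → ℕ)
    (hpos : ∀ i, 1 ≤ i → i ≤ n → 0 < m i)
    (i : ℕ) (hi1 : 2 ≤ i) (hi2 : i ≤ n - 1)
    (hlt : m (i - 1) < m i) (heq : m (i - 1) = m (i + 1)) :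
    NBand n m = (m i - m (i - 1)) + NBand n (fun j => if j = i then m (i + 1) else m j) := by
  have h1 : i + 1 ≤ n := by omega
  have h2 : 1 ≤ m (i - 1) := hpos (i - 1) (by omega) (by omega)
  have h3 : 1 ≤ m 1 := hpos 1 (by omega) (by omega)
  have hm1 : 1 ≤ (fun j => if j = i then m (i + 1) else m j) 1 := by
    simp only []
    rw [if_neg (by omega : ¬(1 = i))]
    exact h3
  have hctx : UD6.Ctx n i (m (i - 1)) (m i) m (fun j => if j = i then m (i + 1) else m j) :=
    UD6.mkCtx n i (m (i - 1)) (m i) m _ hi1 h1 rfl rfl heq.symm hlt h2 (fun _ => rfl)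
  exact UD6.key n i (m (i - 1)) (m i) m _ hm1 hctx
end

section
/- Let m_1, m_2 be positive integers. Then N([m_2,m_1]) = gcd(m_2,m_1), i.e. the up-and-down graph of the band dimension vector (m_1, m_1+m_2, m_2) for n = 2 has exactly gcd(m_2,m_1) connected components. -/
namespace UD2

variable (m : ℕ → ℕ)

lemma beta0 : bandBeta 2 m 0 = m 1 := by norm_num [bandBeta, bandM]
lemma beta1 : bandBeta 2 m 1 = m 1 + m 2 := by norm_num [bandBeta, bandM]
lemma beta2 : bandBeta 2 m 2 = m 2 := by norm_num [bandBeta, bandM]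
lemma bm1 : bandM 2 m 1 = m 1 := by norm_num [bandM]
lemma bm2 : bandM 2 m 2 = m 2 := by norm_num [bandM]

/-- level-0 vertex -/
def V0 (j : ℕ) (h2 : 1 ≤ j) (h3 : j ≤ m 1) : UDVert 2 (bandBeta 2 m) :=
  ⟨(0, j), by omega, h2, by rw [beta0]; exact h3⟩

/-- level-1 vertex -/
def V1 (j : ℕ) (h2 : 1 ≤ j) (h3 : j ≤ m 1 + m 2) : UDVert 2 (bandBeta 2 m) :=
  ⟨(1, j), by omega, h2, by rw [beta1]; exact h3⟩

/-- level-2 vertex -/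
def V2 (j : ℕ) (h2 : 1 ≤ j) (h3 : j ≤ m 2) : UDVert 2 (bandBeta 2 m) :=
  ⟨(2, j), by omega, h2, by rw [beta2]; exact h3⟩

lemma V1_eq {j j' : ℕ} (e : j = j') (h2 h3 h2' h3') :
    V1 m j h2 h3 = V1 m j' h2' h3' := by subst e; rfl

/-- blue edge i = 1 : e1_j — e0_j -/
lemma adj10 (j : ℕ) (h2 : 1 ≤ j) (h3 : j ≤ m 1) :
    (bandGraph 2 m).Adj (V1 m j h2 (by omega)) (V0 m j h2 h3) := by
  refine ⟨?_, Or.inr ⟨1, j, le_refl _, by norm_num, h2, by rw [bm1]; exact h3, ?_⟩⟩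
  · intro h
    have := congrArg (fun v : UDVert 2 (bandBeta 2 m) => v.1.1) h
    simp [V1, V0] at this
  · exact Or.inl ⟨by decide, Or.inl ⟨rfl, rfl⟩⟩

/-- red edge i = 1 : e0_j — e1_{m2+j} -/
lemma adj01 (j : ℕ) (h2 : 1 ≤ j) (h3 : j ≤ m 1) :
    (bandGraph 2 m).Adj (V0 m j h2 h3) (V1 m (j + m 2) (by omega) (by omega)) := by
  refine ⟨?_, Or.inl ⟨1, m 1 + 1 - j, by omega, by norm_num, by omega,
    by rw [bm1]; omega, ?_⟩⟩
  · intro h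
    have := congrArg (fun v : UDVert 2 (bandBeta 2 m) => v.1.1) h
    simp [V1, V0] at this
  · refine Or.inr ⟨by decide, Or.inr ⟨?_, ?_⟩⟩
    · show (1, j + m 2) = (1, bandBeta 2 m 1 + 1 - (m 1 + 1 - j))
      rw [beta1]; congr 1; omega
    · show (0, j) = (1 - 1, bandBeta 2 m (1 - 1) + 1 - (m 1 + 1 - j))
      norm_num [beta0]; omega

/-- red edge i = 2 : e2_j — e1_j -/
lemma adj21 (j : ℕ) (h2 : 1 ≤ j) (h3 : j ≤ m 2) :
    (bandGraph 2 m).Adj (V2 m j h2 h3) (V1 m j h2 (by omega)) := by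
  refine ⟨?_, Or.inl ⟨2, j, by norm_num, le_refl _, h2, by rw [bm2]; exact h3, ?_⟩⟩
  · intro h
    have := congrArg (fun v : UDVert 2 (bandBeta 2 m) => v.1.1) h
    simp [V1, V2] at this
  · exact Or.inl ⟨by decide, Or.inl ⟨rfl, rfl⟩⟩

/-- blue edge i = 2 : e1_{m1+j} — e2_j -/
lemma adj12 (j : ℕ) (h2 : 1 ≤ j) (h3 : j ≤ m 2) :
    (bandGraph 2 m).Adj (V1 m (m 1 + j) (by omega) (by omega)) (V2 m j h2 h3) := by
  refine ⟨?_, Or.inr ⟨2, m 2 + 1 - j, by norm_num, le_refl _, by omega,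
    by rw [bm2]; omega, ?_⟩⟩
  · intro h
    have := congrArg (fun v : UDVert 2 (bandBeta 2 m) => v.1.1) h
    simp [V1, V2] at this
  · refine Or.inr ⟨by decide, Or.inr ⟨?_, ?_⟩⟩
    · show (2, j) = (2, bandBeta 2 m 2 + 1 - (m 2 + 1 - j))
      rw [beta2]; congr 1; omega
    · show (1, m 1 + j) = (2 - 1, bandBeta 2 m (2 - 1) + 1 - (m 2 + 1 - j))
      norm_num [beta1]; omega

end UD2
namespace UD2

variable (m : ℕ → ℕ)

/-- the "next" map on level-1 indices -/
def nxt (j : ℕ) : ℕ := if j ≤ m 1 then j + m 2 else j - m 1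

lemma nxt_bounds (hm2 : 0 < m 2) (j : ℕ) (h2 : 1 ≤ j) (h3 : j ≤ m 1 + m 2) :
    1 ≤ nxt m j ∧ nxt m j ≤ m 1 + m 2 := by
  unfold nxt; split <;> omega

lemma nxt_mod (hm1 : 0 < m 1) (hm2 : 0 < m 2) (j : ℕ) (h2 : 1 ≤ j)
    (h3 : j ≤ m 1 + m 2) :
    nxt m j - 1 = (j - 1 + m 2) % (m 1 + m 2) := by
  unfold nxt; split
  · rw [Nat.mod_eq_of_lt (by omega)]; omega
  · rw [Nat.mod_eq_sub_mod (by omega), Nat.mod_eq_of_lt (by omega)]; omega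

lemma reach_step (hm1 : 0 < m 1) (hm2 : 0 < m 2) (j : ℕ) (h2 : 1 ≤ j)
    (h3 : j ≤ m 1 + m 2) :
    (bandGraph 2 m).Reachable (V1 m j h2 h3)
      (V1 m (nxt m j) (nxt_bounds m hm2 j h2 h3).1 (nxt_bounds m hm2 j h2 h3).2) := by
  by_cases h : j ≤ m 1
  · have e : nxt m j = j + m 2 := by unfold nxt; rw [if_pos h]
    refine ((adj10 m j h2 h).reachable.trans (adj01 m j h2 h).reachable).trans ?_
    rw [V1_eq m e.symm _ _ (nxt_bounds m hm2 j h2 h3).1 (nxt_bounds m hm2 j h2 h3).2]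
  · have e : nxt m j = j - m 1 := by unfold nxt; rw [if_neg h]
    have hk1 : 1 ≤ j - m 1 := by omega
    have hk2 : j - m 1 ≤ m 2 := by omega
    have e2 : m 1 + (j - m 1) = j := by omega
    refine SimpleGraph.Reachable.trans ?_ ((adj21 m (j - m 1) hk1 hk2).reachable.trans ?_)
    · rw [← V1_eq m e2 (by omega) (by omega) h2 h3]
      exact (adj12 m (j - m 1) hk1 hk2).reachable
    · rw [V1_eq m e.symm _ _ (nxt_bounds m hm2 j h2 h3).1 (nxt_bounds m hm2 j h2 h3).2]

lemma reach_iter (hm1 : 0 < m 1) (hm2 : 0 < m 2) (t j : ℕ) (h2 : 1 ≤ j)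
    (h3 : j ≤ m 1 + m 2) :
    ∃ (k : ℕ) (hk1 : 1 ≤ k) (hk2 : k ≤ m 1 + m 2),
      k - 1 = (j - 1 + t * m 2) % (m 1 + m 2) ∧
      (bandGraph 2 m).Reachable (V1 m j h2 h3) (V1 m k hk1 hk2) := by
  induction t with
  | zero =>
      exact ⟨j, h2, h3, by rw [Nat.mod_eq_of_lt (by omega)]; omega, SimpleGraph.Reachable.refl _⟩
  | succ t ih =>
      obtain ⟨k, hk1, hk2, hkmod, hreach⟩ := ih
      obtain ⟨hn1, hn2⟩ := nxt_bounds m hm2 k hk1 hk2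
      refine ⟨nxt m k, hn1, hn2, ?_, hreach.trans (reach_step m hm1 hm2 k hk1 hk2)⟩
      rw [nxt_mod m hm1 hm2 k hk1 hk2, hkmod, Nat.mod_add_mod]
      congr 1; ring

end UD2
namespace UD2

/-- key number-theoretic fact: multiples of `a` mod `M` realize every residue
congruent mod `gcd a M`. -/
lemma exists_mul_modEq (a M : ℕ) (hM : 0 < M) (x y : ℕ)
    (hxy : x % Nat.gcd a M = y % Nat.gcd a M) :
    ∃ t : ℕ, x + t * a ≡ y [MOD M] := by
  set g := Nat.gcd a M with hg
  have hdvd : (g : ℤ) ∣ (y : ℤ) - x :=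
    Int.modEq_iff_dvd.mp (Int.natCast_modEq_iff.mpr hxy)
  obtain ⟨c, hc⟩ := hdvd
  have hbez : (g : ℤ) = a * Nat.gcdA a M + M * Nat.gcdB a M := Nat.gcd_eq_gcd_ab a M
  set t₀ : ℤ := c * Nat.gcdA a M with ht₀
  have hmod : (x : ℤ) + t₀ * a ≡ y [ZMOD M] := by
    rw [Int.modEq_iff_dvd]
    refine ⟨c * Nat.gcdB a M, ?_⟩
    rw [ht₀]
    linear_combination hc + c * hbez
  have hMne : (M : ℤ) ≠ 0 := by exact_mod_cast hM.ne'
  refine ⟨(t₀ % M).toNat, ?_⟩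
  have htcast : ((t₀ % M).toNat : ℤ) = t₀ % M :=
    Int.toNat_of_nonneg (Int.emod_nonneg t₀ hMne)
  have ht' : ((t₀ % M).toNat : ℤ) ≡ t₀ [ZMOD M] := by
    rw [htcast]; exact Int.emod_emod_of_dvd t₀ dvd_rfl
  have : ((x + (t₀ % M).toNat * a : ℕ) : ℤ) ≡ (y : ℤ) [ZMOD M] := by
    push_cast
    exact ((ht'.mul_right (a : ℤ)).add_left (x : ℤ)).trans hmod
  exact Int.natCast_modEq_iff.mp this

end UD2
namespace UD2

variable (m : ℕ → ℕ)

lemma gcd_eq : Nat.gcd (m 2) (m 1 + m 2) = Nat.gcd (m 2) (m 1) :=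
  Nat.gcd_add_self_right (m 2) (m 1)

/-- level-1 vertices with indices congruent mod `gcd (m 2) (m 1)` are connected. -/
lemma reach_congr (hm1 : 0 < m 1) (hm2 : 0 < m 2) (j j' : ℕ) (h2 : 1 ≤ j)
    (h3 : j ≤ m 1 + m 2) (h2' : 1 ≤ j') (h3' : j' ≤ m 1 + m 2)
    (hmod : j % Nat.gcd (m 2) (m 1) = j' % Nat.gcd (m 2) (m 1)) :
    (bandGraph 2 m).Reachable (V1 m j h2 h3) (V1 m j' h2' h3') := by
  have hmod' : (j - 1) % Nat.gcd (m 2) (m 1 + m 2) = (j' - 1) % Nat.gcd (m 2) (m 1 + m 2) := by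
    rw [gcd_eq m]
    have h' : (j - 1) + 1 ≡ (j' - 1) + 1 [MOD Nat.gcd (m 2) (m 1)] := by
      have e1 : j - 1 + 1 = j := by omega
      have e2 : j' - 1 + 1 = j' := by omega
      rw [e1, e2]; exact hmod
    exact Nat.ModEq.add_right_cancel' 1 h'
  obtain ⟨t, ht⟩ := exists_mul_modEq (m 2) (m 1 + m 2) (by omega) (j - 1) (j' - 1) hmod'
  obtain ⟨k, hk1, hk2, hkmod, hreach⟩ := reach_iter m hm1 hm2 t j h2 h3
  have h1 : (j - 1 + t * m 2) % (m 1 + m 2) = (j' - 1) % (m 1 + m 2) := ht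
  have h2m : (j' - 1) % (m 1 + m 2) = j' - 1 := Nat.mod_eq_of_lt (by omega)
  have hk : k = j' := by omega
  subst hk
  exact hreach
/-- every vertex is connected to the level-1 vertex with the same second index. -/
lemma reach_to_lvl1 (hm1 : 0 < m 1) (hm2 : 0 < m 2) (v : UDVert 2 (bandBeta 2 m)) :
    ∃ (h2 : 1 ≤ v.1.2) (h3 : v.1.2 ≤ m 1 + m 2),
      (bandGraph 2 m).Reachable v (V1 m v.1.2 h2 h3) := by
  obtain ⟨⟨i, j⟩, hi, hj1, hj2⟩ := v
  interval_cases i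
  · rw [beta0] at hj2
    refine ⟨hj1, ?_, ?_⟩
    · show j ≤ m 1 + m 2; omega
    · exact (adj10 m j hj1 hj2).symm.reachable
  · rw [beta1] at hj2
    exact ⟨hj1, hj2, SimpleGraph.Reachable.refl _⟩
  · rw [beta2] at hj2
    refine ⟨hj1, ?_, ?_⟩
    · show j ≤ m 1 + m 2; omega
    · exact (adj21 m j hj1 hj2).reachable

end UD2
namespace UD2

variable (m : ℕ → ℕ)

lemma f_adj (hm1 : 0 < m 1) (hm2 : 0 < m 2) (v w : UDVert 2 (bandBeta 2 m))
    (h : (bandGraph 2 m).Adj v w) :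
    ((v.1.2 : ZMod (Nat.gcd (m 2) (m 1))) = (w.1.2 : ZMod (Nat.gcd (m 2) (m 1)))) := by
  set g := Nat.gcd (m 2) (m 1) with hgdef
  have hgpos : 0 < g := Nat.pos_of_ne_zero (by simp [hgdef, Nat.gcd_eq_zero_iff]; omega)
  haveI : NeZero g := ⟨hgpos.ne'⟩
  have hg2 : (m 2 : ZMod g) = 0 :=
    (ZMod.natCast_eq_zero_iff _ _).mpr (Nat.gcd_dvd_left _ _)
  have hg1 : (m 1 : ZMod g) = 0 :=
    (ZMod.natCast_eq_zero_iff _ _).mpr (Nat.gcd_dvd_right _ _)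
  obtain ⟨hne, hred | hblue⟩ := h
  · obtain ⟨i, j, hi1, hi2, hj1, hj2, hc⟩ := hred
    interval_cases i
    · rcases hc with ⟨he, -⟩ | ⟨-, ⟨hp, hq⟩ | ⟨hq, hp⟩⟩
      · exact absurd he (by decide)
      all_goals {
        rw [bm1] at hj2
        have e : bandBeta 2 m 1 + 1 - j = (bandBeta 2 m (1 - 1) + 1 - j) + m 2 := by
          rw [beta1]; norm_num [beta0]; omega
        simp only [hp, hq, e, Nat.cast_add, hg2, add_zero]
      }
    · rcases hc with ⟨-, ⟨hp, hq⟩ | ⟨hq, hp⟩⟩ | ⟨he, -⟩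
      · simp [hp, hq]
      · simp [hp, hq]
      · exact absurd (by decide : Even (2 - 2)) he
  · obtain ⟨i, j, hi1, hi2, hj1, hj2, hc⟩ := hblue
    interval_cases i
    · rcases hc with ⟨-, ⟨hp, hq⟩ | ⟨hq, hp⟩⟩ | ⟨he, -⟩
      · simp [hp, hq]
      · simp [hp, hq]
      · exact absurd he (by decide)
    · rcases hc with ⟨he, -⟩ | ⟨-, ⟨hp, hq⟩ | ⟨hq, hp⟩⟩
      · exact absurd (by decide : Even (2 - 2)) he
      all_goals {
        rw [bm2] at hj2
        have e : bandBeta 2 m (2 - 1) + 1 - j = (bandBeta 2 m 2 + 1 - j) + m 1 := by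
          norm_num [beta1, beta2]; omega
        simp only [hp, hq, e, Nat.cast_add, hg1, add_zero]
      }

end UD2

/-- For `n = 2`, the up-and-down graph of the band dimension vector
`(m 1, m 1 + m 2, m 2)` has exactly `gcd (m 2) (m 1)` connected components. -/
theorem stmt7 (m : ℕ → ℕ) (h1 : 0 < m 1) (h2 : 0 < m 2) :
    NBand 2 m = Nat.gcd (m 2) (m 1) := by
  classical
  set g := Nat.gcd (m 2) (m 1) with hgdef
  have hgpos : 0 < g := Nat.pos_of_ne_zero (by simp [hgdef, Nat.gcd_eq_zero_iff]; omega)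
  haveI : NeZero g := ⟨hgpos.ne'⟩
  have hgm1 : g ≤ m 1 := Nat.le_of_dvd h1 (Nat.gcd_dvd_right _ _)
  have hgm2 : g ≤ m 2 := Nat.le_of_dvd h2 (Nat.gcd_dvd_left _ _)
  let f : UDVert 2 (bandBeta 2 m) → ZMod g := fun v => (v.1.2 : ZMod g)
  have hfw : ∀ v w, (bandGraph 2 m).Reachable v w → f v = f w := by
    intro v w h
    obtain ⟨p⟩ := h
    induction p with
    | nil => rfl
    | cons ha _ ih => exact (UD2.f_adj m h1 h2 _ _ ha).trans ih
  let fbar : (bandGraph 2 m).ConnectedComponent → ZMod g := Quot.lift f hfw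
  have hbij : Function.Bijective fbar := by
    constructor
    · refine SimpleGraph.ConnectedComponent.ind₂ ?_
      intro v w h
      have hfvw : f v = f w := h
      have hmod : v.1.2 % g = w.1.2 % g :=
        (ZMod.natCast_eq_natCast_iff' _ _ _).mp hfvw
      obtain ⟨hv2, hv3, hvr⟩ := UD2.reach_to_lvl1 m h1 h2 v
      obtain ⟨hw2, hw3, hwr⟩ := UD2.reach_to_lvl1 m h1 h2 w
      refine SimpleGraph.ConnectedComponent.sound ?_
      exact (hvr.trans (UD2.reach_congr m h1 h2 _ _ hv2 hv3 hw2 hw3 hmod)).trans hwr.symm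
    · intro c
      have hj2 : 1 ≤ ZMod.val c + g := by omega
      have hj3 : ZMod.val c + g ≤ m 1 + m 2 := by
        have := ZMod.val_lt c; omega
      refine ⟨(bandGraph 2 m).connectedComponentMk (UD2.V1 m (ZMod.val c + g) hj2 hj3), ?_⟩
      show ((ZMod.val c + g : ℕ) : ZMod g) = c
      push_cast
      simp [ZMod.natCast_self, ZMod.natCast_zmod_val]
  have := Nat.card_eq_of_bijective fbar hbij
  rw [NBand, this, Nat.card_zmod]
end

section
/- Let m_1, m_2, m_3 be positive integers. Then N([m_3,m_2,m_1]) = gcd(m_2, |m_3 − m_1|), i.e. the up-and-down graph of the band dimension vector (m_1, m_1+m_2, m_2+m_3, m_3) for n = 3 has exactly gcd(m_2, |m_3 − m_1|) connected components (with the convention gcd(m_2,0) = m_2). -/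
namespace Stmt8Aux

variable (m : ℕ → ℕ)

lemma beta0 : bandBeta 3 m 0 = m 1 := by simp [bandBeta, bandM]
lemma beta1 : bandBeta 3 m 1 = m 1 + m 2 := by norm_num [bandBeta, bandM]
lemma beta2 : bandBeta 3 m 2 = m 2 + m 3 := by norm_num [bandBeta, bandM]
lemma beta3 : bandBeta 3 m 3 = m 3 := by norm_num [bandBeta, bandM]
lemma bm1 : bandM 3 m 1 = m 1 := by norm_num [bandM]
lemma bm2 : bandM 3 m 2 = m 2 := by norm_num [bandM]
lemma bm3 : bandM 3 m 3 = m 3 := by norm_num [bandM]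

/-- Reachability on underlying pairs. -/
def Rch (p q : ℕ × ℕ) : Prop :=
  ∃ (hp : p.1 ≤ 3 ∧ 1 ≤ p.2 ∧ p.2 ≤ bandBeta 3 m p.1)
    (hq : q.1 ≤ 3 ∧ 1 ≤ q.2 ∧ q.2 ≤ bandBeta 3 m q.1),
    (bandGraph 3 m).Reachable ⟨p, hp⟩ ⟨q, hq⟩

lemma Rch.symm {m' : ℕ → ℕ} {p q} (h : Rch m' p q) : Rch m' q p := by
  obtain ⟨hp, hq, h⟩ := h; exact ⟨hq, hp, h.symm⟩

lemma Rch.trans {m' : ℕ → ℕ} {p q r} (h : Rch m' p q) (h' : Rch m' q r) : Rch m' p r := by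
  obtain ⟨hp, hq, h⟩ := h
  obtain ⟨hq', hr, h'⟩ := h'
  have : (⟨q, hq⟩ : UDVert 3 (bandBeta 3 m')) = ⟨q, hq'⟩ := Subtype.ext rfl
  rw [this] at h
  exact ⟨hp, hr, h.trans h'⟩

lemma rch_refl (p : ℕ × ℕ) (hp : p.1 ≤ 3 ∧ 1 ≤ p.2 ∧ p.2 ≤ bandBeta 3 m p.1) :
    Rch m p p := ⟨hp, hp, SimpleGraph.Reachable.refl _⟩

lemma rch_of_adj (p q : ℕ × ℕ)
    (hp : p.1 ≤ 3 ∧ 1 ≤ p.2 ∧ p.2 ≤ bandBeta 3 m p.1)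
    (hq : q.1 ≤ 3 ∧ 1 ≤ q.2 ∧ q.2 ≤ bandBeta 3 m q.1)
    (hne : p ≠ q)
    (h : RedAdj 3 (bandBeta 3 m) (bandM 3 m) p q ∨
         BlueAdj 3 (bandBeta 3 m) (bandM 3 m) p q) : Rch m p q := by
  refine ⟨hp, hq, SimpleGraph.Adj.reachable ⟨fun hc => hne (congrArg Subtype.val hc), h⟩⟩

lemma rch1r (j : ℕ) (hj1 : 1 ≤ j) (hj2 : j ≤ m 1) : Rch m (1, j) (0, j) := by
  refine rch_of_adj m _ _ ⟨by norm_num, hj1, by rw [beta1]; omega⟩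
    ⟨by norm_num, hj1, by rw [beta0]; omega⟩ (by simp) ?_
  exact Or.inl ⟨1, j, le_refl 1, by norm_num, hj1, by rw [bm1]; exact hj2,
    Or.inl ⟨by decide, Or.inl ⟨rfl, rfl⟩⟩⟩

lemma rch1b (j : ℕ) (hj1 : 1 ≤ j) (hj2 : j ≤ m 1) : Rch m (1, m 2 + j) (0, j) := by
  refine rch_of_adj m _ _ ⟨by norm_num, by omega, by rw [beta1]; omega⟩
    ⟨by norm_num, hj1, by rw [beta0]; omega⟩ (by simp) ?_
  refine Or.inr ⟨1, m 1 + 1 - j, le_refl 1, by norm_num, by omega, by rw [bm1]; omega,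
    Or.inr ⟨by decide, Or.inl ⟨?_, ?_⟩⟩⟩
  · rw [beta1]; simp only [Prod.mk.injEq, true_and]; omega
  · rw [beta0]; simp only [Prod.mk.injEq, true_and]; omega

lemma rch2b (t : ℕ) (ht1 : 1 ≤ t) (ht2 : t ≤ m 2) : Rch m (2, t) (1, t) := by
  refine rch_of_adj m _ _ ⟨by norm_num, ht1, by rw [beta2]; omega⟩
    ⟨by norm_num, ht1, by rw [beta1]; omega⟩ (by simp) ?_
  exact Or.inr ⟨2, t, by norm_num, by norm_num, ht1, by rw [bm2]; exact ht2,
    Or.inl ⟨by decide, Or.inl ⟨rfl, rfl⟩⟩⟩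

lemma rch2r (k : ℕ) (hk1 : 1 ≤ k) (hk2 : k ≤ m 2) : Rch m (2, m 3 + k) (1, m 1 + k) := by
  refine rch_of_adj m _ _ ⟨by norm_num, by omega, by rw [beta2]; omega⟩
    ⟨by norm_num, by omega, by rw [beta1]; omega⟩ (by simp) ?_
  refine Or.inl ⟨2, m 2 + 1 - k, by norm_num, by norm_num, by omega, by rw [bm2]; omega,
    Or.inr ⟨by decide, Or.inl ⟨?_, ?_⟩⟩⟩
  · rw [beta2]; simp only [Prod.mk.injEq, true_and]; omega
  · rw [beta1]; simp only [Prod.mk.injEq, true_and]; omega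

lemma rch3r (k : ℕ) (hk1 : 1 ≤ k) (hk2 : k ≤ m 3) : Rch m (3, k) (2, k) := by
  refine rch_of_adj m _ _ ⟨by norm_num, hk1, by rw [beta3]; omega⟩
    ⟨by norm_num, hk1, by rw [beta2]; omega⟩ (by simp) ?_
  exact Or.inl ⟨3, k, by norm_num, by norm_num, hk1, by rw [bm3]; exact hk2,
    Or.inl ⟨by decide, Or.inl ⟨rfl, rfl⟩⟩⟩

lemma rch3b (k : ℕ) (hk1 : 1 ≤ k) (hk2 : k ≤ m 3) : Rch m (3, k) (2, m 2 + k) := by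
  refine rch_of_adj m _ _ ⟨by norm_num, hk1, by rw [beta3]; omega⟩
    ⟨by norm_num, by omega, by rw [beta2]; omega⟩ (by simp) ?_
  refine Or.inr ⟨3, m 3 + 1 - k, by norm_num, by norm_num, by omega, by rw [bm3]; omega,
    Or.inr ⟨by decide, Or.inl ⟨?_, ?_⟩⟩⟩
  · rw [beta3]; simp only [Prod.mk.injEq, true_and]; omega
  · rw [beta2]; simp only [Prod.mk.injEq, true_and]; omega


lemma mod_uniq {b x y : ℕ} (hb : 0 < b) (hx1 : 1 ≤ x) (hx2 : x ≤ b) (hy1 : 1 ≤ y)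
    (hy2 : y ≤ b) (h : x % b = y % b) : x = y := by
  rcases eq_or_lt_of_le hx2 with rfl | hx
  · rcases eq_or_lt_of_le hy2 with rfl | hy
    · rfl
    · rw [Nat.mod_self, Nat.mod_eq_of_lt hy] at h; omega
  · rcases eq_or_lt_of_le hy2 with rfl | hy
    · rw [Nat.mod_self, Nat.mod_eq_of_lt hx] at h; omega
    · rwa [Nat.mod_eq_of_lt hx, Nat.mod_eq_of_lt hy] at h

lemma stepA (hb : 0 < m 2) : ∀ u, 1 ≤ u → u ≤ m 2 + m 3 →
    ∃ t q, 1 ≤ t ∧ t ≤ m 2 ∧ u = t + q * m 2 ∧ Rch m (2, u) (1, t) := by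
  intro u
  induction u using Nat.strong_induction_on with
  | _ u ih =>
    intro hu1 hu2
    by_cases h : u ≤ m 2
    · exact ⟨u, 0, hu1, h, by ring_nf, rch2b m u hu1 h⟩
    · have hk1 : 1 ≤ u - m 2 := by omega
      have hk2 : u - m 2 ≤ m 3 := by omega
      obtain ⟨t, q, ht1, ht2, heq, hr⟩ := ih (u - m 2) (by omega) hk1 (by omega)
      refine ⟨t, q + 1, ht1, ht2, ?_, ?_⟩
      · rw [add_mul, one_mul]
        generalize q * m 2 = Q at heq ⊢
        omega
      · have e1 : Rch m (2, u) (3, u - m 2) := by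
          have := (rch3b m (u - m 2) hk1 hk2).symm
          rwa [show m 2 + (u - m 2) = u by omega] at this
        exact (e1.trans (rch3r m (u - m 2) hk1 hk2)).trans hr

lemma stepB (hb : 0 < m 2) : ∀ t, 1 ≤ t → t ≤ m 1 + m 2 →
    ∃ s q, 1 ≤ s ∧ s ≤ m 2 ∧ t = s + q * m 2 ∧ Rch m (1, t) (1, s) := by
  intro t
  induction t using Nat.strong_induction_on with
  | _ t ih =>
    intro ht1 ht2
    by_cases h : t ≤ m 2
    · refine ⟨t, 0, ht1, h, by ring_nf, ?_⟩
      exact rch_refl m (1, t) ⟨by norm_num, ht1, by rw [beta1]; omega⟩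
    · have hj1 : 1 ≤ t - m 2 := by omega
      have hj2 : t - m 2 ≤ m 1 := by omega
      obtain ⟨s, q, hs1, hs2, heq, hr⟩ := ih (t - m 2) (by omega) hj1 (by omega)
      refine ⟨s, q + 1, hs1, hs2, ?_, ?_⟩
      · rw [add_mul, one_mul]
        generalize q * m 2 = Q at heq ⊢
        omega
      · have e1 : Rch m (1, t) (0, t - m 2) := by
          have := rch1b m (t - m 2) hj1 hj2
          rwa [show m 2 + (t - m 2) = t by omega] at this
        exact (e1.trans (rch1r m (t - m 2) hj1 hj2).symm).trans hr

lemma stepC (hb : 0 < m 2) (s : ℕ) (hs1 : 1 ≤ s) (hs2 : s ≤ m 2) :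
    ∃ t, 1 ≤ t ∧ t ≤ m 2 ∧ (t + m 1) % m 2 = (s + m 3) % m 2 ∧ Rch m (1, s) (1, t) := by
  -- choose k ∈ [1, m 2] with k + m 1 ≡ s [MOD m 2]
  set x := s + m 1 * m 2 - m 1 with hx
  have hx1 : 1 ≤ x := by
    have : m 1 ≤ m 1 * m 2 := Nat.le_mul_of_pos_right _ hb
    omega
  set k := (x - 1) % m 2 + 1 with hk
  have hk1 : 1 ≤ k := by omega
  have hk2 : k ≤ m 2 := by
    have := Nat.mod_lt (x - 1) hb
    omega
  have hkx : k + m 2 * ((x - 1) / m 2) = x := by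
    have := Nat.div_add_mod (x - 1) (m 2)
    omega
  have hkm : (k + m 1) % m 2 = s % m 2 := by
    have e1 : (k + m 1) % m 2 = (k + m 1 + ((x - 1) / m 2) * m 2) % m 2 :=
      (Nat.add_mul_mod_self_right _ _ _).symm
    have e2 : k + m 1 + ((x - 1) / m 2) * m 2 = s + m 1 * m 2 := by
      have h1 : m 1 ≤ m 1 * m 2 := Nat.le_mul_of_pos_right _ hb
      rw [mul_comm ((x - 1) / m 2) (m 2)]
      generalize hQ : m 2 * ((x - 1) / m 2) = Q at hkx
      generalize hB : m 1 * m 2 = B at hx h1 ⊢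
      omega
    rw [e1, e2, Nat.add_mul_mod_self_right]
  -- stepB applied to m 1 + k
  obtain ⟨s₀, q₀, hs₀1, hs₀2, heq₀, hr₀⟩ := stepB m hb (m 1 + k) (by omega) (by omega)
  have hs₀ : s₀ = s := by
    refine mod_uniq hb hs₀1 hs₀2 hs1 hs2 ?_
    have : (m 1 + k) % m 2 = s₀ % m 2 := by rw [heq₀, Nat.add_mul_mod_self_right]
    rw [← this, show m 1 + k = k + m 1 by ring, hkm]
  -- stepA applied to m 3 + k
  obtain ⟨t, q₁, ht1, ht2, heq₁, hr₁⟩ := stepA m hb (m 3 + k) (by omega) (by omega)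
  refine ⟨t, ht1, ht2, ?_, ?_⟩
  · have e1 : (t + m 1) % m 2 = (t + m 1 + q₁ * m 2) % m 2 :=
      (Nat.add_mul_mod_self_right _ _ _).symm
    have e2 : t + m 1 + q₁ * m 2 = m 3 + k + m 1 := by
      generalize hQ : q₁ * m 2 = Q at heq₁ ⊢
      omega
    have e3 : (m 3 + k + m 1) % m 2 = (m 3 + s) % m 2 := by
      have : m 3 + k + m 1 = (k + m 1) + m 3 := by ring
      rw [this, show m 3 + s = s + m 3 by ring]
      exact Nat.ModEq.add_right (m 3) hkm
    rw [e1, e2, e3, show m 3 + s = s + m 3 by ring]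
  · have hchain : Rch m (1, s₀) (1, t) :=
      (hr₀.symm.trans (rch2r m k hk1 hk2).symm).trans hr₁
    rwa [hs₀] at hchain

lemma iterC (hb : 0 < m 2) : ∀ (N : ℕ) (s : ℕ), 1 ≤ s → s ≤ m 2 →
    ∃ t, 1 ≤ t ∧ t ≤ m 2 ∧ (t + N * m 1) % m 2 = (s + N * m 3) % m 2 ∧
      Rch m (1, s) (1, t) := by
  intro N
  induction N with
  | zero =>
    intro s hs1 hs2
    exact ⟨s, hs1, hs2, by simp, rch_refl m (1, s) ⟨by norm_num, hs1, by rw [beta1]; omega⟩⟩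
  | succ N ih =>
    intro s hs1 hs2
    obtain ⟨t, ht1, ht2, hmod, hr⟩ := ih s hs1 hs2
    obtain ⟨t', ht'1, ht'2, hmod', hr'⟩ := stepC m hb t ht1 ht2
    refine ⟨t', ht'1, ht'2, ?_, hr.trans hr'⟩
    have e1 : t' + (N + 1) * m 1 = (t' + m 1) + N * m 1 := by ring
    have e2 : (t + m 3) + N * m 1 = (t + N * m 1) + m 3 := by ring
    have e3 : (s + N * m 3) + m 3 = s + (N + 1) * m 3 := by ring
    calc (t' + (N + 1) * m 1) % m 2
        = ((t' + m 1) + N * m 1) % m 2 := by rw [e1]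
      _ = ((t + m 3) + N * m 1) % m 2 := Nat.ModEq.add_right _ hmod'
      _ = ((t + N * m 1) + m 3) % m 2 := by rw [e2]
      _ = ((s + N * m 3) + m 3) % m 2 := Nat.ModEq.add_right _ hmod
      _ = (s + (N + 1) * m 3) % m 2 := by rw [e3]

lemma exists_shift (hb : 0 < m 2) (s s' : ℕ)
    (hss : s ≡ s' [MOD Nat.gcd (m 2) (Nat.dist (m 3) (m 1))]) :
    ∃ N : ℕ, (s' + N * m 1) % m 2 = (s + N * m 3) % m 2 := by
  set g := Nat.gcd (m 2) (Nat.dist (m 3) (m 1)) with hgdef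
  set d : ℤ := (m 3 : ℤ) - (m 1 : ℤ) with hd
  have hna : d.natAbs = Nat.dist (m 3) (m 1) := by rw [Nat.dist]; omega
  have hgcd : Int.gcd (m 2 : ℤ) d = g := by
    rw [Int.gcd, Int.natAbs_natCast, hna]
  set X := Int.gcdA (m 2 : ℤ) d with hX
  set Y := Int.gcdB (m 2 : ℤ) d with hY
  have hbez : (g : ℤ) = (m 2 : ℤ) * X + d * Y := by
    rw [← hgcd]; exact Int.gcd_eq_gcd_ab _ _
  obtain ⟨w, hw⟩ : (g : ℤ) ∣ (s' : ℤ) - (s : ℤ) := hss.dvd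
  set n' : ℤ := Y * w with hn'
  have hb' : (m 2 : ℤ) ≠ 0 := by exact_mod_cast hb.ne'
  set N : ℕ := (n' % (m 2 : ℤ)).toNat with hNdef
  have hN : (N : ℤ) = n' % (m 2 : ℤ) :=
    Int.toNat_of_nonneg (Int.emod_nonneg n' hb')
  set Q : ℤ := n' / (m 2 : ℤ) with hQ
  have hN' : (N : ℤ) = Y * w - (m 2 : ℤ) * Q := by
    rw [hN, Int.emod_def]
  refine ⟨N, ?_⟩
  have : (s' + N * m 1) ≡ (s + N * m 3) [MOD m 2] := by
    rw [Nat.modEq_iff_dvd]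
    refine ⟨-(Q * d + X * w), ?_⟩
    push_cast
    linear_combination ((m 3 : ℤ) - (m 1 : ℤ)) * hN' - hw - w * hbez
  exact this


lemma reduceAll (hb : 0 < m 2) (x : UDVert 3 (bandBeta 3 m)) :
    ∃ s, 1 ≤ s ∧ s ≤ m 2 ∧ s % m 2 = x.1.2 % m 2 ∧ Rch m x.1 (1, s) := by
  obtain ⟨⟨i, j⟩, hi, hj1, hj2⟩ := x
  simp only at hi hj1 hj2 ⊢
  interval_cases i
  · rw [beta0] at hj2
    obtain ⟨s, q, hs1, hs2, heq, hr⟩ := stepB m hb j hj1 (by omega)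
    exact ⟨s, hs1, hs2, by rw [heq, Nat.add_mul_mod_self_right],
      ((rch1r m j hj1 hj2).symm).trans hr⟩
  · rw [beta1] at hj2
    obtain ⟨s, q, hs1, hs2, heq, hr⟩ := stepB m hb j hj1 hj2
    exact ⟨s, hs1, hs2, by rw [heq, Nat.add_mul_mod_self_right], hr⟩
  · rw [beta2] at hj2
    obtain ⟨s, q, hs1, hs2, heq, hr⟩ := stepA m hb j hj1 hj2
    exact ⟨s, hs1, hs2, by rw [heq, Nat.add_mul_mod_self_right], hr⟩
  · rw [beta3] at hj2
    obtain ⟨s, q, hs1, hs2, heq, hr⟩ := stepA m hb j hj1 (by omega)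
    exact ⟨s, hs1, hs2, by rw [heq, Nat.add_mul_mod_self_right],
      (rch3r m j hj1 hj2).trans hr⟩

lemma adj_inv (g : ℕ) (hgb : g ∣ m 2) (hgd : g ∣ Nat.dist (m 3) (m 1))
    {x y : UDVert 3 (bandBeta 3 m)} (h : (bandGraph 3 m).Adj x y) :
    (x.1.2 : ZMod g) = (y.1.2 : ZMod g) := by
  have hb0 : ((m 2 : ℕ) : ZMod g) = 0 := (ZMod.natCast_eq_zero_iff _ _).mpr hgb
  have hca : ((m 3 : ℕ) : ZMod g) = ((m 1 : ℕ) : ZMod g) := by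
    rw [ZMod.natCast_eq_natCast_iff]
    rcases le_total (m 1) (m 3) with hle | hle
    · have hd : Nat.dist (m 3) (m 1) = m 3 - m 1 := by simp only [Nat.dist]; omega
      exact ((Nat.modEq_iff_dvd' hle).mpr (hd ▸ hgd)).symm
    · have hd : Nat.dist (m 3) (m 1) = m 1 - m 3 := by simp only [Nat.dist]; omega
      exact (Nat.modEq_iff_dvd' hle).mpr (hd ▸ hgd)
  obtain ⟨-, hred | hblue⟩ := h
  · obtain ⟨i, j, hi1, hi3, hj1, hjr, hcase⟩ := hred
    interval_cases i
    · rw [bm1] at hjr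
      rcases hcase with ⟨-, hc⟩ | ⟨hne, -⟩
      · rcases hc with ⟨hx, hy⟩ | ⟨hx, hy⟩ <;> rw [hx, hy]
      · exact absurd (by decide) hne
    · rw [bm2] at hjr
      rcases hcase with ⟨he, -⟩ | ⟨-, hc⟩
      · exact absurd he (by decide)
      · have e2 : bandBeta 3 m 2 + 1 - j = (m 2 + 1 - j) + m 3 := by rw [beta2]; omega
        have e1 : bandBeta 3 m (2 - 1) + 1 - j = (m 2 + 1 - j) + m 1 := by
          norm_num [beta1]; omega
        rcases hc with ⟨hx, hy⟩ | ⟨hx, hy⟩ <;> rw [hx, hy] <;>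
          simp only [e1, e2] <;> push_cast <;> rw [hca]
    · rw [bm3] at hjr
      rcases hcase with ⟨-, hc⟩ | ⟨hne, -⟩
      · rcases hc with ⟨hx, hy⟩ | ⟨hx, hy⟩ <;> rw [hx, hy]
      · exact absurd (by decide) hne
  · obtain ⟨i, j, hi1, hi3, hj1, hjr, hcase⟩ := hblue
    interval_cases i
    · rw [bm1] at hjr
      rcases hcase with ⟨hne, -⟩ | ⟨-, hc⟩
      · exact absurd (by decide) hne
      · have e2 : bandBeta 3 m 1 + 1 - j = (m 1 + 1 - j) + m 2 := by rw [beta1]; omega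
        have e1 : bandBeta 3 m (1 - 1) + 1 - j = (m 1 + 1 - j) + 0 := by
          norm_num [beta0]
        rcases hc with ⟨hx, hy⟩ | ⟨hx, hy⟩ <;> rw [hx, hy] <;>
          simp only [e1, e2] <;> push_cast <;> rw [hb0] <;> ring
    · rw [bm2] at hjr
      rcases hcase with ⟨-, hc⟩ | ⟨he, -⟩
      · rcases hc with ⟨hx, hy⟩ | ⟨hx, hy⟩ <;> rw [hx, hy]
      · exact absurd he (by decide)
    · rw [bm3] at hjr
      rcases hcase with ⟨hne, -⟩ | ⟨-, hc⟩
      · exact absurd (by decide) hne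
      · have e2 : bandBeta 3 m 3 + 1 - j = (m 3 + 1 - j) + 0 := by rw [beta3]; omega
        have e1 : bandBeta 3 m (3 - 1) + 1 - j = (m 3 + 1 - j) + m 2 := by
          norm_num [beta2]; omega
        rcases hc with ⟨hx, hy⟩ | ⟨hx, hy⟩ <;> rw [hx, hy] <;>
          simp only [e1, e2] <;> push_cast <;> rw [hb0] <;> ring

end Stmt8Aux

open Stmt8Aux in
/-- For `n = 3`, the up-and-down graph of the band dimension vector
`(m 1, m 1 + m 2, m 2 + m 3, m 3)` has exactly `gcd (m 2) |m 3 - m 1|` connected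
components. -/
theorem stmt8 (m : ℕ → ℕ) (h1 : 0 < m 1) (h2 : 0 < m 2) (h3 : 0 < m 3) :
    NBand 3 m = Nat.gcd (m 2) (Nat.dist (m 3) (m 1)) := by
  classical
  set g := Nat.gcd (m 2) (Nat.dist (m 3) (m 1)) with hgdef
  have hg0 : 0 < g := Nat.gcd_pos_of_pos_left _ h2
  have hgb : g ∣ m 2 := Nat.gcd_dvd_left _ _
  have hgd : g ∣ Nat.dist (m 3) (m 1) := Nat.gcd_dvd_right _ _
  haveI : NeZero g := ⟨hg0.ne'⟩
  set φ : UDVert 3 (bandBeta 3 m) → ZMod g := fun x => (x.1.2 : ZMod g) with hφ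
  have hwalk : ∀ v w (p : (bandGraph 3 m).Walk v w), p.IsPath → φ v = φ w := by
    intro v w p hp
    clear hp
    induction p with
    | nil => rfl
    | cons h _ ih => exact (adj_inv m g hgb hgd h).trans ih
  set Ψ := SimpleGraph.ConnectedComponent.lift φ hwalk with hΨ
  have hbij : Function.Bijective Ψ := by
    constructor
    · intro K K'
      refine SimpleGraph.ConnectedComponent.ind₂ (β := fun c d => Ψ c = Ψ d → c = d) ?_ K K'
      intro v w hvw
      simp only [hΨ, SimpleGraph.ConnectedComponent.lift_mk, hφ] at hvw
      rw [SimpleGraph.ConnectedComponent.eq]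
      have hmodg : v.1.2 ≡ w.1.2 [MOD g] := (ZMod.natCast_eq_natCast_iff _ _ _).mp hvw
      obtain ⟨s, hs1, hs2, hsm, hrs⟩ := reduceAll m h2 v
      obtain ⟨s', hs'1, hs'2, hs'm, hrs'⟩ := reduceAll m h2 w
      have hss' : s ≡ s' [MOD g] :=
        ((Nat.ModEq.of_dvd hgb hsm).trans hmodg).trans (Nat.ModEq.of_dvd hgb hs'm).symm
      obtain ⟨N, hN⟩ := exists_shift m h2 s s' (hgdef ▸ hss')
      obtain ⟨t, ht1, ht2, htm, hrt⟩ := iterC m h2 N s hs1 hs2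
      have hts' : t = s' := by
        refine mod_uniq h2 ht1 ht2 hs'1 hs'2 ?_
        have h' : (t + N * m 1) % m 2 = (s' + N * m 1) % m 2 := by rw [htm, ← hN]
        exact Nat.ModEq.add_right_cancel' (N * m 1) h'
      have hch : Rch m v.1 w.1 := (hrs.trans (hts' ▸ hrt)).trans hrs'.symm
      obtain ⟨hp, hq, hr⟩ := hch
      have e1 : (⟨v.1, hp⟩ : UDVert 3 (bandBeta 3 m)) = v := Subtype.ext rfl
      have e2 : (⟨w.1, hq⟩ : UDVert 3 (bandBeta 3 m)) = w := Subtype.ext rfl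
      rwa [e1, e2] at hr
    · intro z
      have hgm2 : g ≤ m 2 := Nat.le_of_dvd h2 hgb
      set s : ℕ := if z.val = 0 then g else z.val with hs
      have hs1 : 1 ≤ s := by
        rw [hs]; split_ifs with h
        · omega
        · omega
      have hsg : s ≤ g := by
        rw [hs]; split_ifs with h
        · exact le_refl g
        · exact (ZMod.val_lt z).le
      refine ⟨(bandGraph 3 m).connectedComponentMk
        ⟨(1, s), by norm_num, hs1, by rw [beta1]; omega⟩, ?_⟩
      simp only [hΨ, SimpleGraph.ConnectedComponent.lift_mk, hφ]
      have hz : ((z.val : ℕ) : ZMod g) = z := ZMod.natCast_rightInverse z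
      show ((s : ℕ) : ZMod g) = z
      rw [hs]; split_ifs with h
      · rw [ZMod.natCast_self, ← hz, h, Nat.cast_zero]
      · exact hz
  rw [NBand, Nat.card_eq_of_bijective Ψ hbij, Nat.card_zmod]
end
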